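/- arXiv:1102.2817 — 5 statements merged into one kernel-verified Lean document; each statement's English description precedes it below -/
import Mathlib

section
/- Let k ≥ 1 be an integer, let 0 < p < 1, q = 1 - p, c > 0. Then for every u > 0, Σ_{n ≥ k, n ≡ k (mod 2)} (c^n u^{n-1} e^{-cu} / (n-1)!) · (k/n) · C(n, (n+k)/2) · q^{(n+k)/2} p^{(n-k)/2} = e^{-cu} (k/u) (q/p)^{k/2} I_k(2 c u √(pq)), where C(n, m) denotes the binomial coefficient. -/
/-- The modified Bessel function of the first kind of integer order `k`:
`I_k(x) = ∑_{ℓ=0}^∞ (1/((ℓ+k)! ℓ!)) (x/2)^(2ℓ+k)`. -/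
noncomputable def besselI (k : ℕ) (x : ℝ) : ℝ :=
  ∑' ℓ : ℕ, (1 / ((Nat.factorial (ℓ + k) : ℝ) * Nat.factorial ℓ)) * (x / 2) ^ (2 * ℓ + k)

/-- For an integer `k ≥ 1`, reals `0 < p < 1`, `q = 1 - p`, `c > 0` and
`u > 0`, one has
`∑_{n ≥ k, n ≡ k (mod 2)} (c^n u^(n-1) e^{-cu}/(n-1)!) (k/n) C(n,(n+k)/2) q^((n+k)/2) p^((n-k)/2)`
`= e^{-cu} (k/u) (q/p)^(k/2) I_k(2 c u √(pq))`. -/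
theorem sum_hitting_time_density_eq_besselI
    (k : ℕ) (hk : 1 ≤ k) (p q c : ℝ) (hp0 : 0 < p) (hp1 : p < 1) (hq : q = 1 - p)
    (hc : 0 < c) (u : ℝ) (hu : 0 < u) :
    ∑' n : ℕ,
      (if k ≤ n ∧ n % 2 = k % 2 then
        (c ^ n * u ^ (n - 1) * Real.exp (-c * u) / (Nat.factorial (n - 1) : ℝ)) *
          ((k : ℝ) / n) * (n.choose ((n + k) / 2)) *
          q ^ ((n + k) / 2) * p ^ ((n - k) / 2)
      else 0) =
      Real.exp (-c * u) * ((k : ℝ) / u) * (q / p) ^ ((k : ℝ) / 2) *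
        besselI k (2 * c * u * Real.sqrt (p * q)) := by
  have hq0 : 0 < q := by rw [hq]; linarith
  have hpq : 0 ≤ p * q := le_of_lt (mul_pos hp0 hq0)
  set f : ℕ → ℝ := fun n =>
      (if k ≤ n ∧ n % 2 = k % 2 then
        (c ^ n * u ^ (n - 1) * Real.exp (-c * u) / (Nat.factorial (n - 1) : ℝ)) *
          ((k : ℝ) / n) * (n.choose ((n + k) / 2)) *
          q ^ ((n + k) / 2) * p ^ ((n - k) / 2)
      else 0) with hf
  have hinj : Function.Injective (fun ℓ : ℕ => k + 2 * ℓ) := by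
    intro a b h
    simp only at h
    omega
  have hsupp : Function.support f ⊆ Set.range (fun ℓ : ℕ => k + 2 * ℓ) := by
    intro n hn
    by_contra hr
    apply hn
    rw [hf]
    simp only []
    rw [if_neg]
    rintro ⟨h1, h2⟩
    exact hr ⟨(n - k) / 2, show k + 2 * ((n - k) / 2) = n by omega⟩
  rw [← hinj.tsum_eq hsupp]
  rw [besselI, show ∀ x:ℝ, 2 * c * u * x / 2 = c * u * x by intro x; ring]
  rw [← tsum_mul_left]
  apply tsum_congr
  intro ℓ
  have hcond : k ≤ k + 2 * ℓ ∧ (k + 2 * ℓ) % 2 = k % 2 := ⟨by omega, by omega⟩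
  simp only [hf, if_pos hcond]
  have e1 : (k + 2 * ℓ + k) / 2 = k + ℓ := by omega
  have e2 : (k + 2 * ℓ - k) / 2 = ℓ := by omega
  rw [e1, e2]
  have hch : ((k + 2 * ℓ).choose (k + ℓ) : ℝ) =
      ((k + 2 * ℓ).factorial : ℝ) / (((k + ℓ).factorial : ℝ) * (ℓ.factorial : ℝ)) := by
    rw [Nat.cast_choose ℝ (show k + ℓ ≤ k + 2 * ℓ by omega),
      show k + 2 * ℓ - (k + ℓ) = ℓ from by omega]
  rw [hch]
  -- factorial recursion
  have hfacN : (k + 2 * ℓ) * (k + 2 * ℓ - 1).factorial = (k + 2 * ℓ).factorial :=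
    Nat.mul_factorial_pred (by omega)
  have hfac : ((k + 2 * ℓ).factorial : ℝ) =
      ((k + 2 * ℓ : ℕ) : ℝ) * ((k + 2 * ℓ - 1).factorial : ℝ) := by
    exact_mod_cast hfacN.symm
  rw [hfac]
  -- key sqrt identity
  have hkey : (q / p) ^ ((k : ℝ) / 2) * Real.sqrt (p * q) ^ k = q ^ k := by
    rw [Real.sqrt_eq_rpow, ← Real.rpow_natCast ((p * q) ^ ((1:ℝ)/2)) k,
      ← Real.rpow_mul hpq, show (1:ℝ)/2 * (k : ℝ) = (k : ℝ)/2 by ring,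
      ← Real.mul_rpow (by positivity) hpq,
      show q / p * (p * q) = q * q by field_simp,
      Real.mul_rpow hq0.le hq0.le, ← Real.rpow_add hq0,
      show (k : ℝ)/2 + (k : ℝ)/2 = (k : ℝ) by ring, Real.rpow_natCast]
  -- rewrite q^(k+ℓ) using hkey
  rw [show q ^ (k + ℓ) = ((q / p) ^ ((k : ℝ) / 2) * Real.sqrt (p * q) ^ k) * q ^ ℓ by
    rw [hkey, ← pow_add]]
  -- expand (c u √(pq))^(2ℓ+k)
  have hsp : Real.sqrt (p * q) ^ (2 * ℓ + k) = (p ^ ℓ * q ^ ℓ) * Real.sqrt (p * q) ^ k := by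
    rw [pow_add, pow_mul, Real.sq_sqrt hpq, mul_pow]
  have hx : (c * u * Real.sqrt (p * q)) ^ (2 * ℓ + k)
      = c ^ (2 * ℓ + k) * u ^ (2 * ℓ + k) * ((p ^ ℓ * q ^ ℓ) * Real.sqrt (p * q) ^ k) := by
    rw [mul_pow, mul_pow, hsp]
  rw [hx]
  -- exponent normalizations
  rw [show (2 * ℓ + k) = (k + 2 * ℓ) from by omega]
  have hu' : u ^ (k + 2 * ℓ) = u ^ (k + 2 * ℓ - 1) * u := by
    rw [← pow_succ]
    congr 1
    omega
  rw [hu']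
  have hfacc : (ℓ + k).factorial = (k + ℓ).factorial := by rw [Nat.add_comm]
  rw [hfacc]
  have hfne : ((k + 2 * ℓ - 1).factorial : ℝ) ≠ 0 := Nat.cast_ne_zero.2 (Nat.factorial_ne_zero _)
  have hfne2 : (((k + ℓ).factorial : ℝ)) ≠ 0 := Nat.cast_ne_zero.2 (Nat.factorial_ne_zero _)
  have hfne3 : ((ℓ.factorial : ℝ)) ≠ 0 := Nat.cast_ne_zero.2 (Nat.factorial_ne_zero _)
  have hnne : ((k + 2 * ℓ : ℕ) : ℝ) ≠ 0 := Nat.cast_ne_zero.2 (by omega)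
  push_cast
  field_simp
end

section
/- Let k ≥ 1 be an integer and let 0 < p < 1, q = 1 - p. Let (ξ_i)_{i≥1} be i.i.d. random variables with P(ξ_i = 1) = p and P(ξ_i = -1) = q, let S_n = k + ξ_1 + … + ξ_n, and let H = inf{n ≥ 0 : S_n = 0}. Then for every integer n ≥ 1, P(H = n) = (k/n) · C(n, (n+k)/2) · q^{(n+k)/2} p^{(n-k)/2} if n ≥ k and n + k is even, and P(H = n) = 0 otherwise, where C(n, m) denotes the binomial coefficient. -/
open MeasureTheory ProbabilityTheory


noncomputable def FF (p q : ℝ) : ℕ → ℤ → ℝ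
  | 0, k => if k = 0 then 1 else 0
  | (n+1), k => if k = 0 then 0 else p * FF p q n (k+1) + q * FF p q n (k-1)

-- the binomial identity
lemma choose_id (n m k : ℕ) (hn : 1 ≤ n) (hk1 : 1 ≤ k) (hkn : k ≤ n - 1)
    (hm : n + 1 + k = 2 * m) :
    ((k : ℝ)/(n+1)) * ((n+1).choose m) =
      ((k+1 : ℝ)/n) * (n.choose m) + ((k-1 : ℝ)/n) * (n.choose (m-1)) := by
  have hm1 : 1 ≤ m := by omega
  have hmn : m ≤ n := by omega
  have hA := Nat.choose_succ_right_eq n (m-1)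
  rw [show m - 1 + 1 = m by omega] at hA
  have hAR : (n.choose m : ℝ) * m = (n.choose (m-1)) * ((n:ℝ) - m + 1) := by
    have : (n - (m-1) : ℕ) = (n - m + 1 : ℕ) := by omega
    rw [this] at hA
    have := congrArg (Nat.cast : ℕ → ℝ) hA
    push_cast at this
    rw [this, Nat.cast_sub (by omega : m ≤ n)]
  have hP : ((n+1).choose m : ℝ) = (n.choose (m-1)) + (n.choose m) := by
    have := Nat.choose_succ_succ n (m-1)
    rw [show (m-1).succ = m by omega] at this
    rw [show n+1 = n.succ from rfl, this]
    push_cast; ring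
  have hmR : (n : ℝ) + 1 + k = 2 * m := by exact_mod_cast hm
  have hn0 : (n:ℝ) ≠ 0 := by positivity
  have hn1 : (n:ℝ) + 1 ≠ 0 := by positivity
  field_simp
  rw [hP]
  nlinarith [hAR, hmR]

lemma FF_eq (p q : ℝ) : ∀ n, 1 ≤ n → ∀ k : ℕ,
    FF p q n (k:ℤ) = if 1 ≤ k ∧ k ≤ n ∧ Even (n+k) then
      ((k:ℝ)/n) * (n.choose ((n+k)/2)) * q^((n+k)/2) * p^((n-k)/2) else 0 := by
  intro n hn1
  induction n, hn1 using Nat.le_induction with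
  | base =>
    intro k
    simp only [FF]
    rcases k with _ | _ | k
    · norm_num
    · norm_num [FF]
    · have : ¬(k + 1 + 1 ≤ 1) := by omega
      have h1 : ¬((k:ℤ) + 1 + 1 = 0) := by omega
      have h2 : ¬((k:ℤ) + 1 + 1 + 1 = 0) := by omega
      have h3 : ¬((k:ℤ) + 1 + 1 - 1 = 0) := by omega
      push_cast
      rw [if_neg h1]
      simp only [FF, if_neg h2, if_neg h3]
      simp [this]
  | succ n hn IH =>
    intro k
    simp only [FF]
    by_cases hk0 : k = 0
    · subst hk0; norm_num
    have hk1 : 1 ≤ k := by omega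
    have e1 : (k:ℤ)+1 = ((k+1:ℕ):ℤ) := by push_cast; ring
    have e2 : (k:ℤ)-1 = ((k-1:ℕ):ℤ) := by push_cast [hk1]; ring
    rw [if_neg (by exact_mod_cast hk0), e1, e2, IH (k+1), IH (k-1)]
    by_cases hpar : Even (n + 1 + k)
    · obtain ⟨M, hM⟩ := hpar
      have hM' : n + 1 + k = 2 * M := by omega
      have hpar' : Even (n + 1 + k) := ⟨M, hM⟩
      by_cases hkn : k ≤ n + 1
      · by_cases hdiag : k = n + 1
        · -- k = n+1 : only the down term contributes
          subst hdiag
          have c1 : ¬(1 ≤ n+1+1 ∧ n+1+1 ≤ n ∧ Even (n + (n+1+1))) := by omega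
          have c2 : (1 ≤ n+1-1 ∧ n+1-1 ≤ n ∧ Even (n + (n+1-1))) := by
            refine ⟨by omega, by omega, ?_⟩
            have : n + (n+1-1) = 2*n := by omega
            rw [this]; exact even_two_mul n
          have c3 : (1 ≤ n+1 ∧ n+1 ≤ n+1 ∧ Even (n+1+(n+1))) := by
            refine ⟨by omega, le_refl _, ?_⟩
            have : n+1+(n+1) = 2*(n+1) := by omega
            rw [this]; exact even_two_mul _
          rw [if_neg c1, if_pos c2, if_pos c3]
          have e3 : (n + (n+1-1))/2 = n := by omega
          have e4 : (n - (n+1-1))/2 = 0 := by omega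
          have e5 : (n+1+(n+1))/2 = n+1 := by omega
          have e6 : (n+1-(n+1))/2 = 0 := by omega
          rw [e3, e4, e5, e6, Nat.choose_self, Nat.choose_self]
          have hn0 : (n:ℝ) ≠ 0 := by positivity
          have : ((n+1-1:ℕ):ℝ) = (n:ℝ) := by push_cast [show (1:ℕ) ≤ n+1 by omega]; ring
          rw [this]
          push_cast
          field_simp
          ring
        · -- 1 ≤ k ≤ n-1 case
          have hkn' : k + 1 ≤ n := by omega
          have c1 : (1 ≤ k+1 ∧ k+1 ≤ n ∧ Even (n + (k+1))) := by
            refine ⟨by omega, hkn', ⟨M, by omega⟩⟩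
          have c3 : (1 ≤ k ∧ k ≤ n+1 ∧ Even (n+1+k)) := ⟨hk1, hkn, hpar'⟩
          rw [if_pos c1, if_pos c3]
          -- exponent bookkeeping
          have hM1 : 1 ≤ M := by omega
          have hMn : M ≤ n := by omega
          obtain ⟨a, ha⟩ : ∃ a, M = a + 1 := ⟨M - 1, by omega⟩
          obtain ⟨b, hb⟩ : ∃ b, n - M = b := ⟨n - M, rfl⟩
          have e1' : (n + (k+1))/2 = a + 1 := by omega
          have e2' : (n - (k+1))/2 = b := by omega
          have e3' : (n + (k-1))/2 = a := by omega
          have e4' : (n - (k-1))/2 = b + 1 := by omega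
          have e5' : (n+1+k)/2 = a + 1 := by omega
          have e6' : (n+1-k)/2 = b + 1 := by omega
          rw [e1', e2', e5', e6']
          have hdown : (if 1 ≤ k-1 ∧ k-1 ≤ n ∧ Even (n + (k-1)) then
              ((k-1:ℕ):ℝ)/n * (n.choose ((n + (k-1))/2)) * q^((n + (k-1))/2) * p^((n - (k-1))/2)
              else 0) = (((k:ℝ)-1)/n) * (n.choose a) * q^a * p^(b+1) := by
            by_cases hc : 1 ≤ k-1 ∧ k-1 ≤ n ∧ Even (n + (k-1))
            · rw [if_pos hc, e3', e4']
              have : ((k-1:ℕ):ℝ) = (k:ℝ) - 1 := by push_cast [hk1]; ring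
              rw [this]
            · rw [if_neg hc]
              have hk1' : k = 1 := by
                by_contra h
                exact hc ⟨by omega, by omega, ⟨M - 1, by omega⟩⟩
              subst hk1'
              norm_num
          rw [hdown]
          have hid := choose_id n (a+1) k hn hk1 (by omega) (by omega)
          rw [show a+1-1 = a from rfl] at hid
          have hc1 : ((k+1:ℕ):ℝ) = (k:ℝ)+1 := by push_cast; ring
          rw [hc1]
          push_cast
          linear_combination (-(q^(a+1) * p^(b+1))) * hid
      · -- k ≥ n+2 : everything 0
        have c1 : ¬(1 ≤ k+1 ∧ k+1 ≤ n ∧ Even (n + (k+1))) := by omega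
        have c2 : ¬(1 ≤ k-1 ∧ k-1 ≤ n ∧ Even (n + (k-1))) := by omega
        have c3 : ¬(1 ≤ k ∧ k ≤ n+1 ∧ Even (n+1+k)) := by omega
        rw [if_neg c1, if_neg c2, if_neg c3]; ring
    · -- parity fails
      have hpar2 : ¬((n+1+k) % 2 = 0) := by rwa [Nat.even_iff] at hpar
      have c1 : ¬(1 ≤ k+1 ∧ k+1 ≤ n ∧ Even (n + (k+1))) := by
        rintro ⟨-, -, h⟩; rw [Nat.even_iff] at h; omega
      have c2 : ¬(1 ≤ k-1 ∧ k-1 ≤ n ∧ Even (n + (k-1))) := by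
        rintro ⟨h1, -, h⟩; rw [Nat.even_iff] at h; omega
      have c3 : ¬(1 ≤ k ∧ k ≤ n+1 ∧ Even (n+1+k)) := by
        rintro ⟨-, -, h⟩; rw [Nat.even_iff] at h; omega
      rw [if_neg c1, if_neg c2, if_neg c3]; ring

def sgn (b : Bool) : ℤ := if b then 1 else -1

def psum {n : ℕ} (ε : Fin n → Bool) (m : ℕ) : ℤ :=
  ∑ i : Fin n, if (i:ℕ) < m then sgn (ε i) else 0

def goodF (k : ℤ) (n : ℕ) (ε : Fin n → Bool) : Prop :=
  (∀ m < n, k + psum ε m ≠ 0) ∧ k + psum ε n = 0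

instance goodF.dec (k : ℤ) (n : ℕ) : DecidablePred (goodF k n) := fun ε => by
  unfold goodF; infer_instance

lemma psum_zero {n : ℕ} (ε : Fin n → Bool) : psum ε 0 = 0 := by simp [psum]

lemma psum_cons {n : ℕ} (b : Bool) (ε : Fin n → Bool) (m : ℕ) :
    psum (Fin.cons b ε) (m+1) = sgn b + psum ε m := by
  rw [psum, Fin.sum_univ_succ]
  simp [psum, Nat.succ_lt_succ_iff]

lemma goodF_cons {n : ℕ} (k : ℤ) (b : Bool) (ε : Fin n → Bool) :
    goodF k (n+1) (Fin.cons b ε) ↔ k ≠ 0 ∧ goodF (k + sgn b) n ε := by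
  constructor
  · rintro ⟨h1, h2⟩
    refine ⟨by simpa [psum_zero] using h1 0 (Nat.succ_pos n), ?_, ?_⟩
    · intro m hm
      have := h1 (m+1) (by omega)
      rw [psum_cons] at this
      intro hc; exact this (by linarith)
    · rw [psum_cons] at h2; linarith
  · rintro ⟨h0, h1, h2⟩
    constructor
    · intro m hm
      match m with
      | 0 => simpa [psum_zero] using h0
      | (m+1) =>
        rw [psum_cons]
        have := h1 m (by omega)
        intro hc; exact this (by linarith)
    · rw [psum_cons]; linarith

lemma key_sum (p q : ℝ) : ∀ (n : ℕ) (k : ℤ),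
    (∑ ε ∈ Finset.univ.filter (goodF k n), ∏ i, (if ε i then p else q)) = FF p q n k := by
  intro n
  induction n with
  | zero =>
    intro k
    rcases eq_or_ne k 0 with hk | hk
    · subst hk
      have : ∀ ε : Fin 0 → Bool, goodF 0 0 ε := by
        intro ε; exact ⟨by omega, by simp [psum]⟩
      rw [Finset.filter_true_of_mem (fun ε _ => this ε)]
      simp [FF]
    · have : ∀ ε : Fin 0 → Bool, ¬ goodF k 0 ε := by
        intro ε h
        have h2 := h.2
        simp [psum] at h2; exact hk h2
      rw [Finset.filter_false_of_mem (fun ε _ => this ε)]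
      simp [FF, hk]
  | succ n IH =>
    intro k
    rw [Finset.sum_filter]
    rw [← Equiv.sum_comp (Fin.consEquiv (fun _ : Fin (n+1) => Bool))
      (fun ε => if goodF k (n+1) ε then ∏ i, (if ε i then p else q) else 0)]
    rw [Fintype.sum_prod_type]
    have hsplit : ∀ (b : Bool) (ε : Fin n → Bool),
        (Fin.consEquiv (fun _ : Fin (n+1) => Bool)) (b, ε) = Fin.cons b ε := fun _ _ => rfl
    simp only [hsplit]
    have hprod : ∀ (b : Bool) (ε : Fin n → Bool),
        (∏ i : Fin (n+1), (if (Fin.cons (α := fun _ => Bool) b ε i) then p else q)) =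
          (if b then p else q) * ∏ i : Fin n, (if ε i then p else q) := by
      intro b ε
      rw [Fin.prod_univ_succ]
      simp [Fin.cons_succ, Fin.cons_zero]
    simp only [hprod]
    rcases eq_or_ne k 0 with hk | hk
    · subst hk
      have : ∀ (b : Bool) (ε : Fin n → Bool), ¬ goodF 0 (n+1) (Fin.cons b ε) := by
        intro b ε h
        exact ((goodF_cons 0 b ε).1 h).1 rfl
      simp only [FF]
      rw [Fintype.sum_bool]
      simp [this]
    · have hgood : ∀ (b : Bool) (ε : Fin n → Bool),
          goodF k (n+1) (Fin.cons b ε) ↔ goodF (k + sgn b) n ε := by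
        intro b ε; rw [goodF_cons]; exact and_iff_right hk
      simp only [hgood]
      rw [Fintype.sum_bool]
      simp only [sgn, if_true, Bool.false_eq_true, if_false, eq_self_iff_true]
      have ht : (∑ ε : Fin n → Bool, if goodF (k + 1) n ε then
          p * ∏ i : Fin n, (if ε i then p else q) else 0)
          = p * FF p q n (k+1) := by
        rw [← IH (k+1), Finset.sum_filter, Finset.mul_sum]
        congr 1; ext ε
        split_ifs <;> simp
      have hf : (∑ ε : Fin n → Bool, if goodF (k + -1) n ε then
          q * ∏ i : Fin n, (if ε i then p else q) else 0)
          = q * FF p q n (k-1) := by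
        rw [show k + -1 = k - 1 by ring, ← IH (k-1), Finset.sum_filter, Finset.mul_sum]
        congr 1; ext ε
        split_ifs <;> simp
      rw [ht, hf]
      simp only [FF]
      rw [if_neg hk]

-- psum step lemma
lemma psum_succ {n : ℕ} (ε : Fin n → Bool) (m : ℕ) (hm : m < n) :
    psum ε (m+1) = psum ε m + sgn (ε ⟨m, hm⟩) := by
  unfold psum
  have : ∀ i : Fin n, (if (i:ℕ) < m+1 then sgn (ε i) else 0) =
      (if (i:ℕ) < m then sgn (ε i) else 0) + (if (i:ℕ) = m then sgn (ε i) else 0) := by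
    intro i
    rcases lt_trichotomy (i:ℕ) m with h | h | h
    · rw [if_pos (by omega), if_pos h, if_neg (by omega)]; ring
    · rw [if_pos (by omega), if_neg (by omega), if_pos h]; ring
    · rw [if_neg (by omega), if_neg (by omega), if_neg (by omega)]; ring
  rw [Finset.sum_congr rfl (fun i _ => this i), Finset.sum_add_distrib]
  congr 1
  rw [Finset.sum_eq_single (⟨m, hm⟩ : Fin n)]
  · simp
  · intro b _ hb
    rw [if_neg]
    intro hc
    exact hb (Fin.ext hc)
  · intro h; exact absurd (Finset.mem_univ _) h


/-- For a simple random walk started at `k ≥ 1` which moves up by `1`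
with probability `p` and down by `1` with probability `q = 1 - p`, the first hitting time
`H` of `0` satisfies `P(H = n) = (k/n) C(n, (n+k)/2) q^((n+k)/2) p^((n-k)/2)` if `n ≥ k`
and `n + k` is even, and `P(H = n) = 0` otherwise. -/
theorem hitting_time_distribution
    {Ω : Type*} [MeasurableSpace Ω] (P : Measure Ω) [IsProbabilityMeasure P]
    (k : ℕ) (hk : 1 ≤ k) (p q : ℝ) (hp0 : 0 < p) (hp1 : p < 1) (hq : q = 1 - p)
    (ξ : ℕ → Ω → ℤ) (hmeas : ∀ i, Measurable (ξ i))
    (hindep : iIndepFun ξ P)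
    (hup : ∀ i, P {ω | ξ i ω = 1} = ENNReal.ofReal p)
    (hdown : ∀ i, P {ω | ξ i ω = -1} = ENNReal.ofReal q)
    (S : ℕ → Ω → ℤ) (hS : ∀ n ω, S n ω = (k : ℤ) + ∑ i ∈ Finset.range n, ξ i ω)
    (H : Ω → ℕ∞) (hH : ∀ ω, H ω = ⨅ (m : ℕ) (_ : S m ω = 0), (m : ℕ∞))
    (n : ℕ) (hn : 1 ≤ n) :
    P {ω | H ω = (n : ℕ∞)} =
      if k ≤ n ∧ Even (n + k) then
        ENNReal.ofReal (((k : ℝ) / n) * (n.choose ((n + k) / 2)) *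
          q ^ ((n + k) / 2) * p ^ ((n - k) / 2))
      else 0 := by
  have hq0 : 0 ≤ q := by rw [hq]; linarith
  -- Step 1: rewrite the event
  have hEvent : {ω | H ω = (n : ℕ∞)} =
      {ω | (∀ m < n, S m ω ≠ 0) ∧ S n ω = 0} := by
    ext ω
    simp only [Set.mem_setOf_eq, hH ω]
    constructor
    · intro h
      have hex : ∃ m, S m ω = 0 := by
        by_contra hno
        push_neg at hno
        rw [iInf_eq_top.2 (fun m => iInf_eq_top.2 (fun hm => absurd hm (hno m)))] at h
        exact (ENat.coe_ne_top n) h.symm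
      have hmin : ∀ m, S m ω = 0 → n ≤ m := by
        intro m hm
        have : (⨅ (m : ℕ) (_ : S m ω = 0), (m : ℕ∞)) ≤ m := iInf₂_le m hm
        rw [h] at this
        exact_mod_cast this
      have h0 : (⨅ (m : ℕ) (_ : S m ω = 0), (m : ℕ∞)) = (Nat.find hex : ℕ∞) := by
        apply le_antisymm
        · exact iInf₂_le (Nat.find hex) (Nat.find_spec hex)
        · refine le_iInf₂ fun m hm => ?_
          exact_mod_cast Nat.find_min' hex hm
      rw [h0] at h
      have hnf : Nat.find hex = n := by exact_mod_cast h
      refine ⟨fun m hm hc => absurd (hmin m hc) (by omega), ?_⟩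
      rw [← hnf]; exact Nat.find_spec hex
    · rintro ⟨h1, h2⟩
      apply le_antisymm
      · exact iInf₂_le n h2
      · refine le_iInf₂ fun m hm => ?_
        have : n ≤ m := by
          by_contra hc
          exact h1 m (by omega) hm
        exact_mod_cast this
  rw [hEvent]
  set E := {ω | (∀ m < n, S m ω ≠ 0) ∧ S n ω = 0} with hE
  set exts : (Fin n → Bool) → ℕ → ℤ :=
    fun ε i => if h : i < n then sgn (ε ⟨i, h⟩) else 1 with hexts
  set C : (Fin n → Bool) → Set Ω :=
    fun ε => ⋂ i ∈ Finset.range n, {ω | ξ i ω = exts ε i} with hC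
  set B : Set Ω := ⋂ i ∈ Finset.range n, {ω | ξ i ω = 1 ∨ ξ i ω = -1} with hB
  set G : Finset (Fin n → Bool) := Finset.univ.filter (goodF (k:ℤ) n) with hG
  -- up/down sets are measurable
  have hms : ∀ (i : ℕ) (c : ℤ), MeasurableSet {ω | ξ i ω = c} := fun i c =>
    hmeas i (measurableSet_singleton c)
  -- B has full measure
  have hBi : ∀ i : ℕ, P {ω | ξ i ω = 1 ∨ ξ i ω = -1} = 1 := by
    intro i
    have hsplit : {ω | ξ i ω = 1 ∨ ξ i ω = -1} = {ω | ξ i ω = 1} ∪ {ω | ξ i ω = -1} := by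
      ext ω; simp [Set.mem_union]
    have hdisj : Disjoint {ω | ξ i ω = 1} {ω | ξ i ω = -1} := by
      rw [Set.disjoint_left]
      intro ω h1 h2
      simp only [Set.mem_setOf_eq] at h1 h2
      omega
    rw [hsplit, measure_union hdisj (hms i (-1)), hup i, hdown i,
      ← ENNReal.ofReal_add hp0.le hq0]
    rw [show p + q = 1 by rw [hq]; ring]
    simp
  have hmu : ∀ i : ℕ, MeasurableSet {ω | ξ i ω = 1 ∨ ξ i ω = -1} := by
    intro i
    rw [Set.setOf_or]
    exact (hms i 1).union (hms i (-1))
  have hBc : P Bᶜ = 0 := by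
    rw [hB, Set.compl_iInter₂]
    refine le_antisymm (le_trans (measure_biUnion_finset_le _ _) ?_) (zero_le)
    refine le_of_eq (Finset.sum_eq_zero fun i _ => ?_)
    rw [prob_compl_eq_zero_iff (hmu i)]
    exact hBi i
  -- sums along cylinder
  have hCsum : ∀ (ε : Fin n → Bool) (ω : Ω), ω ∈ C ε →
      ∀ m ≤ n, (∑ i ∈ Finset.range m, ξ i ω) = psum ε m := by
    intro ε ω hω
    have hξ : ∀ i < n, ξ i ω = exts ε i := by
      intro i hi
      have := Set.mem_iInter₂.1 hω i (Finset.mem_range.2 hi)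
      exact this
    intro m
    induction m with
    | zero => intro _; simp [psum_zero]
    | succ m ih =>
      intro hm
      have hm' : m < n := by omega
      rw [Finset.sum_range_succ, ih (by omega), psum_succ ε m hm', hξ m hm']
      rw [hexts]
      simp only []
      rw [dif_pos hm']
  -- E ∩ B = union of good cylinders
  have hEB : E ∩ B = ⋃ ε ∈ G, C ε := by
    ext ω
    constructor
    · rintro ⟨hEω, hBω⟩
      have hBω' : ∀ i < n, ξ i ω = 1 ∨ ξ i ω = -1 := by
        intro i hi
        exact Set.mem_iInter₂.1 hBω i (Finset.mem_range.2 hi)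
      set ε : Fin n → Bool := fun i => decide (ξ (i:ℕ) ω = 1) with hε
      have hωC : ω ∈ C ε := by
        rw [hC]
        refine Set.mem_iInter₂.2 fun i hi => ?_
        rw [Finset.mem_range] at hi
        show ξ i ω = exts ε i
        rw [hexts]; simp only []
        rw [dif_pos hi, hε]; simp only []
        by_cases h1 : ξ i ω = 1
        · simp [h1, sgn]
        · rcases hBω' i hi with h | h
          · exact absurd h h1
          · simp [h, sgn, h1]
      have hSω : ∀ m ≤ n, S m ω = (k:ℤ) + psum ε m := by
        intro m hm; rw [hS m ω, hCsum ε ω hωC m hm]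
      have hgood : goodF (k:ℤ) n ε := by
        constructor
        · intro m hm
          rw [← hSω m (by omega)]
          exact hEω.1 m hm
        · rw [← hSω n le_rfl]
          exact hEω.2
      exact Set.mem_biUnion (Finset.mem_filter.2 ⟨Finset.mem_univ _, hgood⟩) hωC
    · intro hω
      obtain ⟨ε, hεG, hωC⟩ := Set.mem_iUnion₂.1 hω
      have hεgood : goodF (k:ℤ) n ε := (Finset.mem_filter.1 hεG).2
      have hξ : ∀ i < n, ξ i ω = exts ε i := by
        intro i hi
        exact Set.mem_iInter₂.1 hωC i (Finset.mem_range.2 hi)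
      have hSω : ∀ m ≤ n, S m ω = (k:ℤ) + psum ε m := by
        intro m hm; rw [hS m ω, hCsum ε ω hωC m hm]
      constructor
      · constructor
        · intro m hm
          rw [hSω m (by omega)]
          exact hεgood.1 m hm
        · rw [hSω n le_rfl]
          exact hεgood.2
      · refine Set.mem_iInter₂.2 fun i hi => ?_
        rw [Finset.mem_range] at hi
        have := hξ i hi
        rw [hexts] at this; simp only [] at this
        rw [dif_pos hi] at this
        show ξ i ω = 1 ∨ ξ i ω = -1
        rcases (ε ⟨i, hi⟩).eq_false_or_eq_true with hb | hb <;>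
          rw [this, hb] <;> simp [sgn]
  -- cylinders are measurable and pairwise disjoint
  have hCmeas : ∀ ε, MeasurableSet (C ε) := fun ε =>
    Finset.measurableSet_biInter _ (fun i _ => hms i _)
  have hCdisj : (G : Set (Fin n → Bool)).PairwiseDisjoint C := by
    intro ε _ ε' _ hne
    rw [Function.onFun, Set.disjoint_left]
    intro ω hω hω'
    apply hne
    funext i
    have h1 := Set.mem_iInter₂.1 hω (i:ℕ) (Finset.mem_range.2 i.isLt)
    have h2 := Set.mem_iInter₂.1 hω' (i:ℕ) (Finset.mem_range.2 i.isLt)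
    simp only [Set.mem_setOf_eq, hexts, dif_pos i.isLt] at h1 h2
    rw [h1] at h2
    rcases (ε i).eq_false_or_eq_true with hb | hb <;>
      rcases (ε' i).eq_false_or_eq_true with hb' | hb' <;>
        rw [hb, hb'] <;> rw [hb, hb'] at h2 <;> simp [sgn] at h2 ⊢
  -- compute P E
  have hPE : P E = P (E ∩ B) := by
    apply le_antisymm
    · calc P E = P ((E ∩ B) ∪ (E ∩ Bᶜ)) := by rw [Set.inter_union_compl]
      _ ≤ P (E ∩ B) + P (E ∩ Bᶜ) := measure_union_le _ _
      _ ≤ P (E ∩ B) + 0 := by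
          gcongr
          exact le_trans (measure_mono Set.inter_subset_right) (le_of_eq hBc)
      _ = P (E ∩ B) := add_zero _
    · exact measure_mono Set.inter_subset_left
  have hCyl : ∀ ε, P (C ε) =
      ∏ i : Fin n, (if ε i then ENNReal.ofReal p else ENNReal.ofReal q) := by
    intro ε
    have hind := hindep.measure_inter_preimage_eq_mul (Finset.range n)
      (sets := fun i => {exts ε i}) (fun i _ => measurableSet_singleton _)
    have hCeq : C ε = ⋂ i ∈ Finset.range n, ξ i ⁻¹' {exts ε i} := rfl
    rw [hCeq, hind]
    have hpre : ∀ i : ℕ, ξ i ⁻¹' {exts ε i} = {ω | ξ i ω = exts ε i} := fun i => rfl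
    simp only [hpre]
    rw [← Fin.prod_univ_eq_prod_range (fun i => P {ω | ξ i ω = exts ε i}) n]
    refine Finset.prod_congr rfl fun i _ => ?_
    rw [hexts]; simp only [dif_pos i.isLt]
    rcases (ε i).eq_false_or_eq_true with hb | hb <;> rw [hb] <;> simp [sgn]
    · exact hup i
    · exact hdown i
  rw [hPE, hEB, measure_biUnion_finset hCdisj (fun ε _ => hCmeas ε)]
  simp only [hCyl]
  -- push ofReal through
  have hterm : ∀ ε : Fin n → Bool,
      (∏ i : Fin n, (if ε i then ENNReal.ofReal p else ENNReal.ofReal q)) =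
        ENNReal.ofReal (∏ i : Fin n, (if ε i then p else q)) := by
    intro ε
    rw [ENNReal.ofReal_prod_of_nonneg]
    · refine Finset.prod_congr rfl fun i _ => ?_
      exact (apply_ite ENNReal.ofReal _ p q).symm
    · intro i _
      split_ifs
      · exact hp0.le
      · exact hq0
  simp only [hterm]
  rw [← ENNReal.ofReal_sum_of_nonneg]
  · rw [key_sum p q n (k:ℤ), FF_eq p q n hn k]
    by_cases hcond : k ≤ n ∧ Even (n + k)
    · rw [if_pos hcond, if_pos ⟨hk, hcond.1, hcond.2⟩]
    · rw [if_neg hcond, if_neg (fun h => hcond ⟨h.2.1, h.2.2⟩)]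
      simp
  · intro ε _
    refine Finset.prod_nonneg fun i _ => ?_
    split_ifs
    · exact hp0.le
    · exact hq0
end

section
/- Let k ≥ 1 be an integer and let 0 < λ ≤ μ. Then ∫_0^∞ (μ/λ)^{k/2} e^{-(μ+λ)t} (k/t) I_k(2√(μλ) t) dt = 1; in particular, t ↦ (μ/λ)^{k/2} e^{-(μ+λ)t} (k/t) I_k(2√(μλ) t) is a probability density on (0,∞). -/
open MeasureTheory

noncomputable def bbAux (p q : ℝ) : ℕ → ℕ → ℝ
  | 0, 0 => 1
  | 0, _ + 1 => 0
  | k + 1, ℓ =>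
      ((k + 1 : ℝ) * (Nat.factorial (2 * ℓ + k)) /
        ((Nat.factorial (ℓ + k + 1)) * (Nat.factorial ℓ))) * p ^ (ℓ + k + 1) * q ^ ℓ

lemma bbAux_zero_zero (p q : ℝ) : bbAux p q 0 0 = 1 := rfl
lemma bbAux_zero_succ (p q : ℝ) (ℓ : ℕ) : bbAux p q 0 (ℓ+1) = 0 := rfl
lemma bbAux_succ (p q : ℝ) (k ℓ : ℕ) :
    bbAux p q (k+1) ℓ = ((k + 1 : ℝ) * (Nat.factorial (2 * ℓ + k)) /
        ((Nat.factorial (ℓ + k + 1)) * (Nat.factorial ℓ))) * p ^ (ℓ + k + 1) * q ^ ℓ := rfl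

lemma bbAux_nonneg {p q : ℝ} (hp : 0 ≤ p) (hq : 0 ≤ q) (k ℓ : ℕ) : 0 ≤ bbAux p q k ℓ := by
  match k, ℓ with
  | 0, 0 => norm_num [bbAux]
  | 0, ℓ+1 => norm_num [bbAux]
  | k+1, ℓ => rw [bbAux_succ]; positivity

lemma bbAux_apply_zero (p q : ℝ) (k : ℕ) : bbAux p q k 0 = p ^ k := by
  match k with
  | 0 => simp [bbAux]
  | k+1 =>
    rw [bbAux_succ]
    have h0 : 2 * 0 + k = k := by omega
    rw [h0, Nat.factorial_succ, Nat.factorial_zero]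
    have hk : (Nat.factorial k : ℝ) ≠ 0 := by positivity
    push_cast
    field_simp

/-- The key recurrence `b_{k+1,ℓ+1} = p b_{k,ℓ+1} + q b_{k+2,ℓ}`. -/
lemma bbAux_rec (p q : ℝ) (k ℓ : ℕ) :
    bbAux p q (k+1) (ℓ+1) = p * bbAux p q k (ℓ+1) + q * bbAux p q (k+2) ℓ := by
  match k with
  | 0 =>
    rw [bbAux_succ, bbAux_zero_succ, bbAux_succ]
    have e1 : 2 * (ℓ+1) + 0 = (2*ℓ+1)+1 := by omega
    have e2 : 2 * ℓ + 1 = (2*ℓ)+1 := rfl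
    rw [e1]
    have hf1 : (Nat.factorial ((2*ℓ+1)+1) : ℝ) = (2*(ℓ:ℝ)+2) * Nat.factorial (2*ℓ+1) := by
      rw [Nat.factorial_succ]; push_cast; ring
    have hf2 : (Nat.factorial (ℓ+1) : ℝ) = ((ℓ:ℝ)+1) * Nat.factorial ℓ := by
      rw [Nat.factorial_succ]; push_cast; ring
    have e3 : ℓ + 1 + 0 + 1 = ℓ + 2 := by omega
    have e4 : ℓ + 1 + 1 = ℓ + 2 := rfl
    rw [e3, e4, hf1, hf2]
    have hA : (Nat.factorial (2*ℓ+1) : ℝ) ≠ 0 := by positivity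
    have hB : (Nat.factorial (ℓ+2) : ℝ) ≠ 0 := by positivity
    have hC : (Nat.factorial ℓ : ℝ) ≠ 0 := by positivity
    have hD : ((ℓ:ℝ)+1) ≠ 0 := by positivity
    field_simp
    ring
  | K+1 =>
    rw [bbAux_succ, bbAux_succ, bbAux_succ]
    have e1 : 2*(ℓ+1)+(K+1) = (2*ℓ+K+2)+1 := by omega
    have e2 : 2*(ℓ+1)+K = 2*ℓ+K+2 := by omega
    have e3 : 2*ℓ+(K+2) = 2*ℓ+K+2 := by omega
    have e4 : ℓ+1+(K+1)+1 = (ℓ+K+2)+1 := by omega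
    have e5 : ℓ+1+K+1 = ℓ+K+2 := by omega
    have e6 : ℓ+(K+2)+1 = (ℓ+K+2)+1 := by omega
    rw [e1, e2, e3, e4, e5, e6]
    have hf1 : (Nat.factorial ((2*ℓ+K+2)+1) : ℝ) = (2*(ℓ:ℝ)+(K:ℝ)+3) * Nat.factorial (2*ℓ+K+2) := by
      rw [Nat.factorial_succ]; push_cast; ring
    have hf2 : (Nat.factorial ((ℓ+K+2)+1) : ℝ) = ((ℓ:ℝ)+(K:ℝ)+3) * Nat.factorial (ℓ+K+2) := by
      rw [Nat.factorial_succ]; push_cast; ring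
    have hf3 : (Nat.factorial (ℓ+1) : ℝ) = ((ℓ:ℝ)+1) * Nat.factorial ℓ := by
      rw [Nat.factorial_succ]; push_cast; ring
    rw [hf1, hf2, hf3]
    have hA : (Nat.factorial (2*ℓ+K+2) : ℝ) ≠ 0 := by positivity
    have hB : (Nat.factorial (ℓ+K+2) : ℝ) ≠ 0 := by positivity
    have hC : (Nat.factorial ℓ : ℝ) ≠ 0 := by positivity
    have hD : ((ℓ:ℝ)+1) ≠ 0 := by positivity
    have hE : ((ℓ:ℝ)+(K:ℝ)+3) ≠ 0 := by positivity
    push_cast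
    field_simp
    ring

section SumMachine

variable {p q : ℝ} (hq : 0 < q) (hqp : q ≤ p) (hpq : p + q = 1)

lemma hp_pos (hq : 0 < q) (hqp : q ≤ p) : 0 < p := lt_of_lt_of_le hq hqp

/-- Partial sums are at most 1. -/
lemma bbAux_partial_le_one (hq : 0 < q) (hqp : q ≤ p) (hpq : p + q = 1) :
    ∀ L k, (∑ ℓ ∈ Finset.range L, bbAux p q k ℓ) ≤ 1 := by
  have hp : 0 < p := hp_pos hq hqp
  have hp1 : p ≤ 1 := by linarith
  intro L
  induction L with
  | zero => intro k; simp
  | succ L ihL =>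
    intro k
    induction k with
    | zero =>
      rw [Finset.sum_range_succ']
      simp only [bbAux_zero_succ, bbAux_zero_zero]
      simp
    | succ k ihk =>
      rw [Finset.sum_range_succ']
      have hrec : ∀ ℓ, bbAux p q (k+1) (ℓ+1) = p * bbAux p q k (ℓ+1) + q * bbAux p q (k+2) ℓ :=
        fun ℓ => bbAux_rec p q k ℓ
      calc (∑ ℓ ∈ Finset.range L, bbAux p q (k+1) (ℓ+1)) + bbAux p q (k+1) 0
          = p * ((∑ ℓ ∈ Finset.range L, bbAux p q k (ℓ+1)) + bbAux p q k 0)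
            + q * (∑ ℓ ∈ Finset.range L, bbAux p q (k+2) ℓ) := by
            simp only [hrec, bbAux_apply_zero, Finset.sum_add_distrib, ← Finset.mul_sum, pow_succ]
            ring
        _ ≤ p * 1 + q * 1 := by
            refine add_le_add (mul_le_mul_of_nonneg_left ?_ hp.le)
              (mul_le_mul_of_nonneg_left (ihL (k+2)) hq.le)
            rw [← Finset.sum_range_succ']
            exact ihk
        _ = 1 := by linarith

lemma bbAux_summable (hq : 0 < q) (hqp : q ≤ p) (hpq : p + q = 1) (k : ℕ) :
    Summable (fun ℓ => bbAux p q k ℓ) := by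
  have hp : 0 < p := hp_pos hq hqp
  exact summable_of_sum_range_le (fun ℓ => bbAux_nonneg hp.le hq.le k ℓ)
    (fun n => bbAux_partial_le_one hq hqp hpq n k)

/-- The total mass `S_k`. -/
noncomputable def SSum (p q : ℝ) (k : ℕ) : ℝ := ∑' ℓ, bbAux p q k ℓ

lemma SSum_le_one (hq : 0 < q) (hqp : q ≤ p) (hpq : p + q = 1) (k : ℕ) : SSum p q k ≤ 1 :=
  Real.tsum_le_of_sum_range_le (fun ℓ => bbAux_nonneg (hp_pos hq hqp).le hq.le k ℓ)
    (fun n => bbAux_partial_le_one hq hqp hpq n k)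

lemma SSum_nonneg (hq : 0 < q) (hqp : q ≤ p) (k : ℕ) : 0 ≤ SSum p q k :=
  tsum_nonneg (fun ℓ => bbAux_nonneg (hp_pos hq hqp).le hq.le k ℓ)

lemma SSum_zero (p q : ℝ) : SSum p q 0 = 1 := by
  rw [SSum]
  rw [tsum_eq_single 0]
  · exact bbAux_zero_zero p q
  · intro ℓ hℓ
    match ℓ, hℓ with
    | ℓ+1, _ => exact bbAux_zero_succ p q ℓ

lemma SSum_rec (hq : 0 < q) (hqp : q ≤ p) (hpq : p + q = 1) (k : ℕ) :
    SSum p q (k+1) = p * SSum p q k + q * SSum p q (k+2) := by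
  have hsum1 : Summable (fun ℓ => bbAux p q (k+1) ℓ) := bbAux_summable hq hqp hpq (k+1)
  have hsumk : Summable (fun ℓ => bbAux p q k ℓ) := bbAux_summable hq hqp hpq k
  have hsumk' : Summable (fun ℓ => bbAux p q k (ℓ+1)) := by
    exact (summable_nat_add_iff 1).2 hsumk
  have hsum2 : Summable (fun ℓ => bbAux p q (k+2) ℓ) := bbAux_summable hq hqp hpq (k+2)
  rw [SSum, Summable.tsum_eq_zero_add hsum1]
  have : ∀ ℓ, bbAux p q (k+1) (ℓ+1) = p * bbAux p q k (ℓ+1) + q * bbAux p q (k+2) ℓ :=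
    fun ℓ => bbAux_rec p q k ℓ
  rw [tsum_congr this, Summable.tsum_add (hsumk'.mul_left p) (hsum2.mul_left q),
    tsum_mul_left, tsum_mul_left, bbAux_apply_zero]
  have hk0 : (∑' ℓ, bbAux p q k ℓ) = bbAux p q k 0 + ∑' ℓ, bbAux p q k (ℓ+1) :=
    Summable.tsum_eq_zero_add hsumk
  rw [SSum, SSum, hk0, bbAux_apply_zero]
  ring

/-- Differences scale by `p/q`. -/
lemma SSum_diff (hq : 0 < q) (hqp : q ≤ p) (hpq : p + q = 1) (k : ℕ) :
    q * (SSum p q (k+1) - SSum p q (k+2)) = p * (SSum p q k - SSum p q (k+1)) := by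
  have h := SSum_rec hq hqp hpq k
  linear_combination h + SSum p q (k+1) * hpq

lemma SSum_diff_pow (hq : 0 < q) (hqp : q ≤ p) (hpq : p + q = 1) (k : ℕ) :
    SSum p q k - SSum p q (k+1) = (p/q)^k * (SSum p q 0 - SSum p q 1) := by
  induction k with
  | zero => simp
  | succ k ih =>
    have h := SSum_diff hq hqp hpq k
    have : SSum p q (k+1) - SSum p q (k+2) = (p/q) * (SSum p q k - SSum p q (k+1)) := by
      field_simp
      linarith [h]
    rw [this, ih, pow_succ]
    ring

lemma SSum_telescope (p q : ℝ) (n : ℕ) :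
    ∑ k ∈ Finset.range n, (SSum p q k - SSum p q (k+1)) = SSum p q 0 - SSum p q n := by
  induction n with
  | zero => simp
  | succ n ih => rw [Finset.sum_range_succ, ih]; ring

lemma SSum_one_eq_one (hq : 0 < q) (hqp : q ≤ p) (hpq : p + q = 1) : SSum p q 1 = 1 := by
  by_contra hne
  set d := SSum p q 0 - SSum p q 1 with hd
  have hd0 : d ≠ 0 := by
    rw [hd, SSum_zero]
    intro h
    exact hne (by linarith)
  have hratio : (1:ℝ) ≤ p / q := (one_le_div hq).2 hqp
  obtain ⟨n, hn⟩ := exists_nat_gt (2 / |d|)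
  have habs : |∑ k ∈ Finset.range n, (SSum p q k - SSum p q (k+1))| ≥ n * |d| := by
    have : ∑ k ∈ Finset.range n, (SSum p q k - SSum p q (k+1))
        = (∑ k ∈ Finset.range n, (p/q)^k) * d := by
      rw [Finset.sum_mul]
      exact Finset.sum_congr rfl (fun k _ => SSum_diff_pow hq hqp hpq k)
    rw [this, abs_mul]
    have hsumge : (n:ℝ) ≤ ∑ k ∈ Finset.range n, (p/q)^k := by
      calc (n:ℝ) = ∑ k ∈ Finset.range n, (1:ℝ) := by simp
        _ ≤ ∑ k ∈ Finset.range n, (p/q)^k :=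
          Finset.sum_le_sum (fun k _ => one_le_pow₀ hratio)
    have habs2 : |∑ k ∈ Finset.range n, (p/q)^k| = ∑ k ∈ Finset.range n, (p/q)^k := by
      refine abs_of_nonneg ?_
      positivity
    rw [habs2]
    exact mul_le_mul_of_nonneg_right hsumge (abs_nonneg d)
  rw [SSum_telescope] at habs
  have hb1 : |SSum p q 0 - SSum p q n| ≤ 1 := by
    have h1 := SSum_le_one hq hqp hpq 0
    have h2 := SSum_le_one hq hqp hpq n
    have h3 := SSum_nonneg hq hqp 0
    have h4 := SSum_nonneg hq hqp n
    rw [abs_le]; constructor <;> linarith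
  have hdpos : 0 < |d| := abs_pos.2 hd0
  have : (2:ℝ) < n * |d| := by
    rw [div_lt_iff₀ hdpos] at hn
    linarith
  linarith

lemma SSum_eq_one (hq : 0 < q) (hqp : q ≤ p) (hpq : p + q = 1) (k : ℕ) : SSum p q k = 1 := by
  induction k with
  | zero => exact SSum_zero p q
  | succ k ih =>
    have hd0 : SSum p q 0 - SSum p q 1 = 0 := by
      rw [SSum_zero, SSum_one_eq_one hq hqp hpq]; ring
    have := SSum_diff_pow hq hqp hpq k
    rw [hd0, mul_zero] at this
    linarith

end SumMachine


section Analytic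

open MeasureTheory

/-- The termwise integrand. -/
noncomputable def gfun (K : ℕ) (mu lam : ℝ) (ℓ : ℕ) (t : ℝ) : ℝ :=
  ((K + 1 : ℝ) * mu ^ (ℓ + (K + 1)) * lam ^ ℓ /
    ((Nat.factorial (ℓ + (K + 1)) : ℝ) * (Nat.factorial ℓ))) *
    (t ^ (2 * ℓ + K) * Real.exp (-(mu + lam) * t))

lemma integrand_eq_tsum (K : ℕ) (mu lam : ℝ) (hlam : 0 < lam) (hmu : 0 < mu)
    {t : ℝ} (ht : 0 < t) :
    (mu / lam) ^ (((K + 1 : ℕ) : ℝ) / 2) * Real.exp (-(mu + lam) * t) * (((K + 1 : ℕ) : ℝ) / t) *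
      besselI (K + 1) (2 * Real.sqrt (mu * lam) * t)
      = ∑' ℓ, gfun K mu lam ℓ t := by
  rw [besselI, ← tsum_mul_left]
  refine tsum_congr fun ℓ => ?_
  have hml : (0 : ℝ) ≤ mu * lam := by positivity
  have h2 : 2 * Real.sqrt (mu * lam) * t / 2 = Real.sqrt (mu * lam) * t := by ring
  have hpow : (Real.sqrt (mu * lam) * t) ^ (2 * ℓ + (K + 1))
      = (mu * lam) ^ ℓ * Real.sqrt (mu * lam) ^ (K + 1) * t ^ (2 * ℓ + (K + 1)) := by
    rw [mul_pow, pow_add, pow_mul, Real.sq_sqrt hml]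
  have hrp : (mu / lam) ^ (((K + 1 : ℕ) : ℝ) / 2) = Real.sqrt (mu / lam) ^ (K + 1) := by
    rw [Real.rpow_div_two_eq_sqrt _ (by positivity : (0:ℝ) ≤ mu / lam),
      Real.rpow_natCast]
  have hab : Real.sqrt (mu / lam) ^ (K + 1) * Real.sqrt (mu * lam) ^ (K + 1)
      = mu ^ (K + 1) := by
    rw [← mul_pow, ← Real.sqrt_mul (by positivity) (mu * lam)]
    have : mu / lam * (mu * lam) = mu ^ 2 := by field_simp
    rw [this, Real.sqrt_sq hmu.le]
  have htt : (((K + 1 : ℕ) : ℝ) / t) * t ^ (2 * ℓ + (K + 1))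
      = ((K + 1 : ℕ) : ℝ) * t ^ (2 * ℓ + K) := by
    have he : 2 * ℓ + (K + 1) = (2 * ℓ + K) + 1 := by omega
    rw [he, pow_succ]
    field_simp
  rw [gfun, h2, hpow, hrp]
  set a := Real.sqrt (mu / lam) ^ (K + 1) with ha
  set b := Real.sqrt (mu * lam) ^ (K + 1) with hb
  set E := Real.exp (-(mu + lam) * t) with hE
  set F1 := (Nat.factorial (ℓ + (K + 1)) : ℝ) with hF1
  set F2 := (Nat.factorial ℓ : ℝ) with hF2
  have hmp : mu ^ (ℓ + (K + 1)) = mu ^ ℓ * mu ^ (K + 1) := pow_add mu ℓ (K + 1)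
  calc a * E * (((K + 1 : ℕ) : ℝ) / t) *
        (1 / (F1 * F2) * ((mu * lam) ^ ℓ * b * t ^ (2 * ℓ + (K + 1))))
      = (a * b) * E * ((((K + 1 : ℕ) : ℝ) / t) * t ^ (2 * ℓ + (K + 1))) *
          ((mu * lam) ^ ℓ / (F1 * F2)) := by ring
    _ = mu ^ (K + 1) * E * (((K + 1 : ℕ) : ℝ) * t ^ (2 * ℓ + K)) *
          ((mu * lam) ^ ℓ / (F1 * F2)) := by rw [hab, htt]
    _ = ((K + 1 : ℝ) * mu ^ (ℓ + (K + 1)) * lam ^ ℓ / (F1 * F2)) *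
          (t ^ (2 * ℓ + K) * E) := by
        rw [hmp, mul_pow]
        push_cast
        ring

end Analytic

section Analytic2

open MeasureTheory

lemma integral_pow_mul_exp_neg (n : ℕ) {s : ℝ} (hs : 0 < s) :
    ∫ t in Set.Ioi (0:ℝ), t ^ n * Real.exp (-(s * t))
      = (Nat.factorial n : ℝ) / s ^ (n + 1) := by
  have h := Real.integral_rpow_mul_exp_neg_mul_Ioi
    (a := (n : ℝ) + 1) (r := s) (by positivity) hs
  have hcong : ∫ t in Set.Ioi (0:ℝ), t ^ ((n : ℝ) + 1 - 1) * Real.exp (-(s * t))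
      = ∫ t in Set.Ioi (0:ℝ), t ^ n * Real.exp (-(s * t)) := by
    refine setIntegral_congr_fun measurableSet_Ioi (fun t ht => ?_)
    rw [show (n : ℝ) + 1 - 1 = (n : ℝ) by ring, Real.rpow_natCast]
  rw [← hcong, h, Real.Gamma_nat_eq_factorial]
  rw [show (n : ℝ) + 1 = ((n + 1 : ℕ) : ℝ) by push_cast; ring, Real.rpow_natCast]
  rw [div_pow, one_pow]
  ring

lemma integrableOn_pow_mul_exp_neg (n : ℕ) {s : ℝ} (hs : 0 < s) :
    IntegrableOn (fun t : ℝ => t ^ n * Real.exp (-(s * t))) (Set.Ioi 0) := by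
  have h := integrableOn_rpow_mul_exp_neg_mul_rpow
    (p := 1) (s := (n : ℝ)) (b := s) (lt_of_lt_of_le neg_one_lt_zero (Nat.cast_nonneg n)) one_pos hs
  refine h.congr_fun (fun t ht => ?_) measurableSet_Ioi
  dsimp only
  rw [Real.rpow_one, Real.rpow_natCast, neg_mul]

lemma gfun_integrable (K : ℕ) {mu lam : ℝ} (hlam : 0 < lam) (hmu : 0 < mu) (ℓ : ℕ) :
    IntegrableOn (gfun K mu lam ℓ) (Set.Ioi 0) := by
  have hs : 0 < mu + lam := by linarith
  have h := (integrableOn_pow_mul_exp_neg (2 * ℓ + K) hs).const_mul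
    ((K + 1 : ℝ) * mu ^ (ℓ + (K + 1)) * lam ^ ℓ /
      ((Nat.factorial (ℓ + (K + 1)) : ℝ) * (Nat.factorial ℓ)))
  refine IntegrableOn.congr_fun h (fun t ht => ?_) measurableSet_Ioi
  simp only [gfun, neg_mul]

lemma gfun_integral (K : ℕ) {mu lam : ℝ} (hlam : 0 < lam) (hmu : 0 < mu) (ℓ : ℕ) :
    ∫ t in Set.Ioi (0:ℝ), gfun K mu lam ℓ t
      = bbAux (mu / (mu + lam)) (lam / (mu + lam)) (K + 1) ℓ := by
  have hs : 0 < mu + lam := by linarith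
  have : ∫ t in Set.Ioi (0:ℝ), gfun K mu lam ℓ t
      = ((K + 1 : ℝ) * mu ^ (ℓ + (K + 1)) * lam ^ ℓ /
          ((Nat.factorial (ℓ + (K + 1)) : ℝ) * (Nat.factorial ℓ))) *
        ∫ t in Set.Ioi (0:ℝ), t ^ (2 * ℓ + K) * Real.exp (-((mu + lam) * t)) := by
    rw [← integral_const_mul]
    refine setIntegral_congr_fun measurableSet_Ioi (fun t ht => ?_)
    simp only [gfun, neg_mul]
  rw [this, integral_pow_mul_exp_neg _ hs, bbAux_succ]
  have e1 : ℓ + (K + 1) = ℓ + K + 1 := rfl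
  have e2 : 2 * ℓ + K + 1 = (2 * ℓ + K) + 1 := rfl
  rw [e1]
  have hf1 : ((Nat.factorial (ℓ + K + 1)) : ℝ) ≠ 0 := by positivity
  have hf2 : ((Nat.factorial ℓ) : ℝ) ≠ 0 := by positivity
  have hfs : (mu + lam) ≠ 0 := hs.ne'
  rw [div_pow, div_pow]
  have hpows : (mu + lam) ^ (ℓ + K + 1) * (mu + lam) ^ ℓ = (mu + lam) ^ (2 * ℓ + K + 1) := by
    rw [← pow_add]
    congr 1
    omega
  field_simp
  rw [← hpows]

end Analytic2

/-- For an integer `k ≥ 1` and `0 < λ ≤ μ`,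
`∫_0^∞ (μ/λ)^(k/2) e^{-(μ+λ)t} (k/t) I_k(2√(μλ) t) dt = 1`; in particular this function
is a probability density on `(0,∞)`. -/
theorem besselI_density_integral_eq_one
    (k : ℕ) (hk : 1 ≤ k) (lam mu : ℝ) (hlam : 0 < lam) (hlammu : lam ≤ mu) :
    ∫ t in Set.Ioi (0:ℝ),
        (mu / lam) ^ ((k : ℝ) / 2) * Real.exp (-(mu + lam) * t) * ((k : ℝ) / t) *
          besselI k (2 * Real.sqrt (mu * lam) * t) = 1 := by
  obtain ⟨K, rfl⟩ : ∃ K, k = K + 1 := ⟨k - 1, by omega⟩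
  have hmu : 0 < mu := lt_of_lt_of_le hlam hlammu
  have hs : 0 < mu + lam := by linarith
  set p := mu / (mu + lam) with hp
  set q := lam / (mu + lam) with hq'
  have hq : 0 < q := by positivity
  have hqp : q ≤ p := by
    rw [hp, hq']
    gcongr
  have hpq : p + q = 1 := by
    rw [hp, hq']
    field_simp
  have heq : Set.EqOn
      (fun t => (mu / lam) ^ (((K + 1 : ℕ) : ℝ) / 2) * Real.exp (-(mu + lam) * t) *
        (((K + 1 : ℕ) : ℝ) / t) * besselI (K + 1) (2 * Real.sqrt (mu * lam) * t))
      (fun t => ∑' ℓ, gfun K mu lam ℓ t) (Set.Ioi 0) :=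
    fun t ht => integrand_eq_tsum K mu lam hlam hmu ht
  rw [setIntegral_congr_fun measurableSet_Ioi heq]
  have hint : ∀ ℓ : ℕ, Integrable (fun t => gfun K mu lam ℓ t)
      (volume.restrict (Set.Ioi 0)) := fun ℓ => gfun_integrable K hlam hmu ℓ
  have hval : ∀ ℓ : ℕ, (∫ t in Set.Ioi (0:ℝ), gfun K mu lam ℓ t) = bbAux p q (K + 1) ℓ :=
    fun ℓ => gfun_integral K hlam hmu ℓ
  have hnorm : ∀ ℓ : ℕ, (∫ t in Set.Ioi (0:ℝ), ‖gfun K mu lam ℓ t‖) = bbAux p q (K + 1) ℓ := by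
    intro ℓ
    rw [← hval ℓ]
    refine setIntegral_congr_fun measurableSet_Ioi (fun t ht => ?_)
    refine Real.norm_of_nonneg ?_
    have ht' : (0:ℝ) < t := ht
    simp only [gfun]
    exact mul_nonneg (by positivity)
      (mul_nonneg (pow_nonneg ht'.le _) (Real.exp_pos _).le)
  have hsum : Summable (fun ℓ : ℕ => ∫ t in Set.Ioi (0:ℝ), ‖gfun K mu lam ℓ t‖) :=
    (bbAux_summable hq hqp hpq (K + 1)).congr (fun ℓ => (hnorm ℓ).symm)
  rw [← integral_tsum_of_summable_integral_norm hint hsum]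
  rw [tsum_congr hval]
  exact SSum_eq_one hq hqp hpq (K + 1)
end

section
/- Let k ≥ 1 be an integer and let 0 < μ < λ. Then ∫_0^∞ (μ/λ)^{k/2} e^{-(μ+λ)t} (k/t) I_k(2√(μλ) t) dt = (μ/λ)^k, which is strictly less than 1. -/
open MeasureTheory

/-- Ballot-number coefficient `k (2ℓ+k-1)! / ((ℓ+k)! ℓ!)` as a real number. -/
noncomputable def cR (k ℓ : ℕ) : ℝ :=
  (k : ℝ) * (Nat.factorial (2*ℓ + k - 1) : ℝ) /
    ((Nat.factorial (ℓ + k) : ℝ) * (Nat.factorial ℓ : ℝ))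

lemma cR_nonneg (k ℓ : ℕ) : 0 ≤ cR k ℓ := by
  unfold cR; positivity

lemma cR_zero (ℓ : ℕ) : cR 0 ℓ = 0 := by simp [cR]

lemma cR_succ (K ℓ : ℕ) : cR (K+1) ℓ =
    ((K:ℝ)+1) * (Nat.factorial (2*ℓ + K) : ℝ) /
      ((Nat.factorial (ℓ + K + 1) : ℝ) * (Nat.factorial ℓ : ℝ)) := by
  have h1 : 2*ℓ + (K+1) - 1 = 2*ℓ + K := by omega
  have h2 : ℓ + (K+1) = ℓ + K + 1 := by omega
  rw [cR, h1, h2]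
  push_cast
  ring

lemma cR_succ_zero (K : ℕ) : cR (K+1) 0 = 1 := by
  rw [cR_succ]
  have hK : (Nat.factorial K : ℝ) ≠ 0 := Nat.cast_ne_zero.mpr (Nat.factorial_ne_zero K)
  rw [Nat.factorial_succ, Nat.factorial_zero]
  push_cast
  field_simp
  ring

lemma cR_rec (K L : ℕ) : cR (K+1) (L+1) = cR K (L+1) + cR (K+2) L := by
  have e1 : cR (K+1) (L+1)
      = ((K:ℝ)+1) * (Nat.factorial (2*L + K + 2) : ℝ) /
        ((Nat.factorial (L + K + 2) : ℝ) * (Nat.factorial (L+1) : ℝ)) := by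
    rw [cR_succ]
    have n1 : 2*(L+1) + K = 2*L + K + 2 := by omega
    have n2 : L + 1 + K + 1 = L + K + 2 := by omega
    rw [n1, n2]
  have e2 : cR K (L+1)
      = (K : ℝ) * (Nat.factorial (2*L + K + 1) : ℝ) /
        ((Nat.factorial (L + K + 1) : ℝ) * (Nat.factorial (L+1) : ℝ)) := by
    rw [cR]
    have n1 : 2*(L+1) + K - 1 = 2*L + K + 1 := by omega
    have n2 : L + 1 + K = L + K + 1 := by omega
    rw [n1, n2]
  have e3 : cR (K+2) L
      = ((K:ℝ)+2) * (Nat.factorial (2*L + K + 1) : ℝ) /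
        ((Nat.factorial (L + K + 2) : ℝ) * (Nat.factorial L : ℝ)) := by
    have : K + 2 = (K+1) + 1 := rfl
    rw [this, cR_succ]
    have n1 : 2*L + (K+1) = 2*L + K + 1 := by omega
    have n2 : L + (K+1) + 1 = L + K + 2 := by omega
    rw [n1, n2]
    push_cast
    ring
  rw [e1, e2, e3]
  have f1 : (Nat.factorial (2*L + K + 2) : ℝ) = ((2*L + K + 2 : ℕ) : ℝ) * (Nat.factorial (2*L + K + 1) : ℝ) := by
    rw [show 2*L + K + 2 = (2*L + K + 1) + 1 by omega, Nat.factorial_succ]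
    push_cast; ring
  have f2 : (Nat.factorial (L + K + 2) : ℝ) = ((L + K + 2 : ℕ) : ℝ) * (Nat.factorial (L + K + 1) : ℝ) := by
    rw [show L + K + 2 = (L + K + 1) + 1 by omega, Nat.factorial_succ]
    push_cast; ring
  have f3 : (Nat.factorial (L + 1) : ℝ) = ((L + 1 : ℕ) : ℝ) * (Nat.factorial L : ℝ) := by
    rw [Nat.factorial_succ]; push_cast; ring
  have h1 : (Nat.factorial (2*L + K + 1) : ℝ) ≠ 0 := Nat.cast_ne_zero.mpr (Nat.factorial_ne_zero _)
  have h2 : (Nat.factorial (L + K + 1) : ℝ) ≠ 0 := Nat.cast_ne_zero.mpr (Nat.factorial_ne_zero _)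
  have h3 : (Nat.factorial L : ℝ) ≠ 0 := Nat.cast_ne_zero.mpr (Nat.factorial_ne_zero _)
  have h4 : ((L + K + 2 : ℕ) : ℝ) ≠ 0 := by positivity
  have h5 : ((L + 1 : ℕ) : ℝ) ≠ 0 := by positivity
  rw [f1, f2, f3]
  push_cast
  field_simp
  ring

lemma cR_le (k ℓ : ℕ) : cR k ℓ ≤ 2 ^ (2*ℓ + k) := by
  rcases k with _ | K
  · rw [cR_zero]; positivity
  · rw [cR_succ]
    have hden : (0:ℝ) < (Nat.factorial (ℓ + K + 1) : ℝ) * (Nat.factorial ℓ : ℝ) := by positivity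
    have hch : ((2*ℓ + K + 1).choose ℓ : ℝ) * ((Nat.factorial (ℓ + K + 1) : ℝ) * (Nat.factorial ℓ : ℝ))
        = (Nat.factorial (2*ℓ + K + 1) : ℝ) := by
      have h := Nat.choose_mul_factorial_mul_factorial (show ℓ ≤ 2*ℓ + K + 1 by omega)
      have hsub : 2*ℓ + K + 1 - ℓ = ℓ + K + 1 := by omega
      rw [hsub] at h
      calc ((2*ℓ + K + 1).choose ℓ : ℝ) * ((Nat.factorial (ℓ + K + 1) : ℝ) * (Nat.factorial ℓ : ℝ))
          = (((2*ℓ + K + 1).choose ℓ * Nat.factorial ℓ * Nat.factorial (ℓ + K + 1) : ℕ) : ℝ) := by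
            push_cast; ring
        _ = _ := by rw [h]
    have hnum : ((K:ℝ)+1) * (Nat.factorial (2*ℓ + K) : ℝ) ≤ (Nat.factorial (2*ℓ + K + 1) : ℝ) := by
      rw [show 2*ℓ + K + 1 = (2*ℓ + K) + 1 by omega, Nat.factorial_succ]
      push_cast
      have : (0:ℝ) ≤ (Nat.factorial (2*ℓ + K) : ℝ) := by positivity
      nlinarith [this]
    have hch2 : ((2*ℓ + K + 1).choose ℓ : ℝ) ≤ 2 ^ (2*ℓ + (K+1)) := by
      have h2 : (2*ℓ + K + 1).choose ℓ ≤ 2 ^ (2*ℓ + K + 1) := by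
        rw [← Nat.sum_range_choose (2*ℓ + K + 1)]
        exact Finset.single_le_sum (fun i _ => Nat.zero_le _) (Finset.mem_range.mpr (by omega))
      calc ((2*ℓ + K + 1).choose ℓ : ℝ) ≤ ((2 ^ (2*ℓ + K + 1) : ℕ) : ℝ) := Nat.cast_le.mpr h2
        _ = 2 ^ (2*ℓ + (K+1)) := by push_cast; ring_nf
    calc ((K:ℝ)+1) * (Nat.factorial (2*ℓ + K) : ℝ) / ((Nat.factorial (ℓ + K + 1) : ℝ) * (Nat.factorial ℓ : ℝ))
        ≤ (Nat.factorial (2*ℓ + K + 1) : ℝ) / ((Nat.factorial (ℓ + K + 1) : ℝ) * (Nat.factorial ℓ : ℝ)) := by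
          gcongr
      _ = ((2*ℓ + K + 1).choose ℓ : ℝ) := by
          rw [← hch]; field_simp
      _ ≤ 2 ^ (2*ℓ + (K+1)) := hch2

lemma cR_term_le {x : ℝ} (hx : 0 ≤ x) (k ℓ : ℕ) : cR k ℓ * x ^ ℓ ≤ (2:ℝ) ^ k * (4*x) ^ ℓ := by
  calc cR k ℓ * x ^ ℓ ≤ (2:ℝ) ^ (2*ℓ + k) * x ^ ℓ := by
        exact mul_le_mul_of_nonneg_right (cR_le k ℓ) (pow_nonneg hx ℓ)
    _ = (2:ℝ) ^ k * (4*x) ^ ℓ := by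
        rw [pow_add, pow_mul, mul_pow]
        norm_num
        ring

lemma summable_cR {x : ℝ} (hx : 0 ≤ x) (h4 : 4*x < 1) (k : ℕ) :
    Summable (fun ℓ => cR k ℓ * x ^ ℓ) := by
  refine Summable.of_nonneg_of_le
    (fun ℓ => mul_nonneg (cR_nonneg k ℓ) (pow_nonneg hx ℓ))
    (fun ℓ => cR_term_le hx k ℓ) ?_
  exact (summable_geometric_of_lt_one (by positivity) h4).mul_left _

/-- `S_k(x) = ∑_ℓ cR k ℓ x^ℓ`. -/
noncomputable def SX (x : ℝ) (k : ℕ) : ℝ := ∑' ℓ, cR k ℓ * x ^ ℓ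

/-- `E` agrees with `S` except `E_0 = 1`. -/
noncomputable def EX (x : ℝ) (k : ℕ) : ℝ := if k = 0 then 1 else SX x k

lemma SX_zero (x : ℝ) : SX x 0 = 0 := by
  unfold SX
  simp [cR_zero]

lemma SX_nonneg {x : ℝ} (hx : 0 ≤ x) (k : ℕ) : 0 ≤ SX x k :=
  tsum_nonneg (fun ℓ => mul_nonneg (cR_nonneg k ℓ) (pow_nonneg hx ℓ))

lemma SX_le {x : ℝ} (hx : 0 ≤ x) (h4 : 4*x < 1) (k : ℕ) :
    SX x k ≤ 2 ^ k * (1 - 4*x)⁻¹ := by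
  have hg : Summable (fun ℓ : ℕ => (2:ℝ) ^ k * (4*x) ^ ℓ) :=
    (summable_geometric_of_lt_one (by positivity) h4).mul_left _
  calc SX x k ≤ ∑' ℓ, (2:ℝ) ^ k * (4*x) ^ ℓ :=
        Summable.tsum_le_tsum (fun ℓ => cR_term_le hx k ℓ) (summable_cR hx h4 k) hg
    _ = 2 ^ k * (1 - 4*x)⁻¹ := by
        rw [tsum_mul_left, tsum_geometric_of_lt_one (by positivity) h4]

lemma EX_nonneg {x : ℝ} (hx : 0 ≤ x) (k : ℕ) : 0 ≤ EX x k := by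
  unfold EX
  split
  · norm_num
  · exact SX_nonneg hx k

lemma EX_le {x : ℝ} (hx : 0 ≤ x) (h4 : 4*x < 1) (k : ℕ) :
    EX x k ≤ 2 ^ k * (1 - 4*x)⁻¹ := by
  unfold EX
  split
  · rename_i h
    subst h
    rw [pow_zero, one_mul]
    rw [le_inv_comm₀ one_pos (by linarith)]
    linarith
  · exact SX_le hx h4 k

lemma SX_rec {x : ℝ} (hx : 0 < x) (h4 : 4*x < 1) (k : ℕ) :
    SX x (k+1) = EX x k + x * SX x (k+2) := by
  have hsum := summable_cR hx.le h4
  have h0 := Summable.tsum_eq_zero_add (hsum (k+1))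
  have hs1 : Summable (fun ℓ => cR k (ℓ+1) * x ^ (ℓ+1)) := by
    have := (summable_nat_add_iff (f := fun ℓ => cR k ℓ * x ^ ℓ) 1).mpr (hsum k)
    simpa using this
  have hs2 : Summable (fun ℓ => x * (cR (k+2) ℓ * x ^ ℓ)) := (hsum (k+2)).mul_left x
  have hshift : ∀ ℓ : ℕ, cR (k+1) (ℓ+1) * x ^ (ℓ+1)
      = cR k (ℓ+1) * x ^ (ℓ+1) + x * (cR (k+2) ℓ * x ^ ℓ) := by
    intro ℓ
    rw [cR_rec k ℓ]
    ring
  have h0' := Summable.tsum_eq_zero_add (hsum k)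
  have hSk : ∑' ℓ, cR k (ℓ+1) * x ^ (ℓ+1) = SX x k - cR k 0 * x ^ 0 := by
    unfold SX
    rw [h0']
    ring
  calc SX x (k+1) = cR (k+1) 0 * x ^ 0 + ∑' ℓ, cR (k+1) (ℓ+1) * x ^ (ℓ+1) := h0
    _ = 1 + ∑' ℓ, (cR k (ℓ+1) * x ^ (ℓ+1) + x * (cR (k+2) ℓ * x ^ ℓ)) := by
        rw [cR_succ_zero, pow_zero, one_mul]
        exact congrArg _ (tsum_congr hshift)
    _ = 1 + ((∑' ℓ, cR k (ℓ+1) * x ^ (ℓ+1)) + ∑' ℓ, x * (cR (k+2) ℓ * x ^ ℓ)) := by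
        rw [Summable.tsum_add hs1 hs2]
    _ = 1 + ((SX x k - cR k 0 * x ^ 0) + x * SX x (k+2)) := by
        rw [hSk, tsum_mul_left]
        rfl
    _ = EX x k + x * SX x (k+2) := by
        rcases k with _ | K
        · rw [SX_zero, cR_zero]
          unfold EX
          norm_num
        · rw [cR_succ_zero]
          unfold EX
          rw [if_neg (Nat.succ_ne_zero _)]
          ring

/-- The ballot-number generating series evaluates to `y^(K+1)` where `y` is the
root in `(0,2)` of `x y² + 1 = y`. -/
lemma cR_series {x y y' : ℝ} (hx : 0 < x) (h4 : 4*x < 1)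
    (hy0 : 0 < y) (hy2 : y < 2) (hy' : 2 < y')
    (hr : x*y^2 + 1 = y) (hr' : x*y'^2 + 1 = y') (K : ℕ) :
    SX x (K+1) = y ^ (K+1) := by
  have hyy' : y < y' := lt_trans hy2 hy'
  have hy'0 : (0:ℝ) < y' := by linarith
  set D : ℕ → ℝ := fun k => EX x k - y ^ k with hD
  have hD0 : D 0 = 0 := by simp [hD, EX]
  have hrecD : ∀ k, x * D (k+2) = D (k+1) - D k := by
    intro k
    have h1 : EX x (k+1) = EX x k + x * EX x (k+2) := by
      have e1 : EX x (k+1) = SX x (k+1) := if_neg (Nat.succ_ne_zero k)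
      have e2 : EX x (k+2) = SX x (k+2) := if_neg (Nat.succ_ne_zero _)
      rw [e1, e2]
      exact SX_rec hx h4 k
    have h2 : y ^ (k+1) = y ^ k + x * y ^ (k+2) := by
      linear_combination (-(y ^ k)) * hr
    simp only [hD]
    linear_combination h2 - h1
  have hrecu : ∀ k, x * (y'^(k+2) - y^(k+2)) = (y'^(k+1) - y^(k+1)) - (y'^k - y^k) := by
    intro k
    have h2 : y ^ (k+1) = y ^ k + x * y ^ (k+2) := by linear_combination (-(y ^ k)) * hr
    have h2' : y' ^ (k+1) = y' ^ k + x * y' ^ (k+2) := by linear_combination (-(y' ^ k)) * hr'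
    linear_combination h2 - h2'
  have claim : ∀ k, D k * (y' - y) = D 1 * (y'^k - y^k) := by
    have main : ∀ k, D k * (y' - y) = D 1 * (y'^k - y^k)
        ∧ D (k+1) * (y' - y) = D 1 * (y'^(k+1) - y^(k+1)) := by
      intro k
      induction k with
      | zero =>
        constructor
        · rw [hD0]; simp
        · simp
      | succ n ih =>
        refine ⟨ih.2, ?_⟩
        have h1 := hrecD n
        have h2 := hrecu n
        have hmul : x * (D (n+2) * (y' - y)) = x * (D 1 * (y'^(n+2) - y^(n+2))) := by
          linear_combination (y' - y) * h1 - D 1 * h2 + ih.2 - ih.1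
        exact mul_left_cancel₀ hx.ne' hmul
    exact fun k => (main k).1
  have hDle : ∀ k, |D k| ≤ 2 ^ k * (1 - 4*x)⁻¹ + y ^ k := by
    intro k
    have h1 := EX_nonneg hx.le k
    have h2 := EX_le hx.le h4 k
    have h3 : (0:ℝ) ≤ y ^ k := by positivity
    rw [abs_le]
    constructor
    · simp only [hD]; nlinarith
    · simp only [hD]; nlinarith
  have hq : y / y' < 1 := (div_lt_one hy'0).mpr hyy'
  have hq0 : 0 ≤ y / y' := by positivity
  have hp : 2 / y' < 1 := (div_lt_one hy'0).mpr hy'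
  have hp0 : 0 ≤ 2 / y' := by positivity
  have key : ∀ k : ℕ, |D 1| * (1 - (y/y')^k)
      ≤ ((1 - 4*x)⁻¹ * (2/y')^k + (y/y')^k) * (y' - y) := by
    intro k
    have hyk : (0:ℝ) < y' ^ k := by positivity
    have hm : |D 1| * (y'^k - y^k) ≤ (2 ^ k * (1 - 4*x)⁻¹ + y ^ k) * (y' - y) := by
      have hu_nn : (0:ℝ) ≤ y'^k - y^k :=
        sub_nonneg.mpr (pow_le_pow_left₀ hy0.le hyy'.le k)
      calc |D 1| * (y'^k - y^k) = |D 1 * (y'^k - y^k)| := by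
            rw [abs_mul, abs_of_nonneg hu_nn]
        _ = |D k * (y' - y)| := by rw [claim k]
        _ = |D k| * (y' - y) := by
            rw [abs_mul, abs_of_nonneg (by linarith : (0:ℝ) ≤ y' - y)]
        _ ≤ (2 ^ k * (1 - 4*x)⁻¹ + y ^ k) * (y' - y) := by
            exact mul_le_mul_of_nonneg_right (hDle k) (by linarith)
    have h2 : |D 1| * (y'^k - y^k) / y'^k ≤ (2 ^ k * (1 - 4*x)⁻¹ + y ^ k) * (y' - y) / y'^k := by
      gcongr
    calc |D 1| * (1 - (y/y')^k) = |D 1| * (y'^k - y^k) / y'^k := by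
          rw [div_pow]; field_simp
      _ ≤ (2 ^ k * (1 - 4*x)⁻¹ + y ^ k) * (y' - y) / y'^k := h2
      _ = ((1 - 4*x)⁻¹ * (2/y')^k + (y/y')^k) * (y' - y) := by
          have h14 : (1 - 4*x) ≠ 0 := by linarith
          rw [div_pow, div_pow]
          field_simp [hy'0.ne', h14]
  have t1 : Filter.Tendsto (fun k : ℕ => |D 1| * (1 - (y/y')^k)) Filter.atTop
      (nhds (|D 1| * (1 - 0))) :=
    (Filter.Tendsto.const_mul _ (tendsto_const_nhds.sub
      (tendsto_pow_atTop_nhds_zero_of_lt_one hq0 hq)))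
  have t2 : Filter.Tendsto (fun k : ℕ => ((1 - 4*x)⁻¹ * (2/y')^k + (y/y')^k) * (y' - y))
      Filter.atTop (nhds (((1 - 4*x)⁻¹ * 0 + 0) * (y' - y))) :=
    ((((tendsto_pow_atTop_nhds_zero_of_lt_one hp0 hp).const_mul _).add
      (tendsto_pow_atTop_nhds_zero_of_lt_one hq0 hq)).mul_const _)
  have hle := le_of_tendsto_of_tendsto' t1 t2 key
  have hD1 : D 1 = 0 := by
    have h0 : |D 1| ≤ 0 := by
      simpa using hle
    exact abs_nonpos_iff.mp h0
  have hDK : D (K+1) = 0 := by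
    have h := claim (K+1)
    rw [hD1, zero_mul] at h
    rcases mul_eq_zero.mp h with h' | h'
    · exact h'
    · exact absurd h' (sub_ne_zero.mpr hyy'.ne')
  have : EX x (K+1) = y ^ (K+1) := by
    have := hDK
    simp only [hD] at this
    linarith
  calc SX x (K+1) = EX x (K+1) := (if_neg (Nat.succ_ne_zero K)).symm
    _ = y ^ (K+1) := this

lemma integral_pow_mul_exp (m : ℕ) {s : ℝ} (hs : 0 < s) :
    ∫ t in Set.Ioi (0:ℝ), t ^ m * Real.exp (-(s * t))
      = (Nat.factorial m : ℝ) / s ^ (m+1) := by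
  have h := Real.integral_rpow_mul_exp_neg_mul_Ioi (a := (m:ℝ)+1) (by positivity) hs
  rw [show ((m:ℝ)+1) - 1 = (m:ℝ) by ring] at h
  rw [Real.Gamma_nat_eq_factorial] at h
  have hpow : ∀ t : ℝ, t ^ (m:ℝ) = t ^ m := fun t => Real.rpow_natCast t m
  simp_rw [hpow] at h
  rw [h, show ((m:ℝ)+1) = ((m+1 : ℕ) : ℝ) by push_cast; ring, Real.rpow_natCast]
  rw [div_pow, one_pow]
  field_simp

lemma integrableOn_pow_mul_exp (m : ℕ) {s : ℝ} (hs : 0 < s) :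
    IntegrableOn (fun t : ℝ => t ^ m * Real.exp (-(s * t))) (Set.Ioi 0) := by
  have h := integrableOn_rpow_mul_exp_neg_mul_rpow (s := (m:ℝ)) (p := 1) (b := s)
    (lt_of_lt_of_le neg_one_lt_zero (Nat.cast_nonneg m)) one_pos hs
  refine h.congr_fun (fun t ht => ?_) measurableSet_Ioi
  dsimp only
  rw [Real.rpow_natCast, Real.rpow_one, neg_mul]

/-- For an integer `k ≥ 1` and `0 < μ < λ`,
`∫_0^∞ (μ/λ)^(k/2) e^{-(μ+λ)t} (k/t) I_k(2√(μλ) t) dt = (μ/λ)^k < 1`. -/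
theorem besselI_density_integral_lt_one
    (k : ℕ) (hk : 1 ≤ k) (lam mu : ℝ) (hmu : 0 < mu) (hmulam : mu < lam) :
    (∫ t in Set.Ioi (0:ℝ),
        (mu / lam) ^ ((k : ℝ) / 2) * Real.exp (-(mu + lam) * t) * ((k : ℝ) / t) *
          besselI k (2 * Real.sqrt (mu * lam) * t)) = (mu / lam) ^ k ∧
      (mu / lam) ^ k < 1 := by
  obtain ⟨K, rfl⟩ : ∃ K, k = K + 1 := ⟨k - 1, by omega⟩
  have hlam : 0 < lam := hmu.trans hmulam
  constructor
  swap
  · exact pow_lt_one₀ (by positivity) ((div_lt_one hlam).mpr hmulam) (Nat.succ_ne_zero K)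
  obtain ⟨s, hsdef⟩ : ∃ s : ℝ, s = mu + lam := ⟨_, rfl⟩
  obtain ⟨a, hadef⟩ : ∃ a : ℝ, a = Real.sqrt (mu * lam) := ⟨_, rfl⟩
  rw [← hsdef, ← hadef]
  push_cast
  have hs0 : 0 < s := by rw [hsdef]; positivity
  have ha0 : 0 < a := by rw [hadef]; exact Real.sqrt_pos.mpr (by positivity)
  have ha2 : a ^ 2 = mu * lam := by rw [hadef]; exact Real.sq_sqrt (by positivity : (0:ℝ) ≤ mu * lam)
  obtain ⟨x, hxdef⟩ : ∃ x : ℝ, x = mu * lam / s ^ 2 := ⟨_, rfl⟩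
  have hx : 0 < x := by rw [hxdef]; positivity
  have h4 : 4 * x < 1 := by
    have h1 : 4 * (mu * lam) < s ^ 2 := by rw [hsdef]; nlinarith [sq_nonneg (lam - mu)]
    calc 4 * x = 4 * (mu * lam) / s ^ 2 := by rw [hxdef]; ring
      _ < 1 := by rw [div_lt_one (by positivity)]; exact h1
  obtain ⟨y, hydef⟩ : ∃ y : ℝ, y = s / lam := ⟨_, rfl⟩
  obtain ⟨y', hy'def⟩ : ∃ y' : ℝ, y' = s / mu := ⟨_, rfl⟩
  have hy0 : 0 < y := by rw [hydef]; positivity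
  have hy2 : y < 2 := by rw [hydef, div_lt_iff₀ hlam, hsdef]; linarith
  have hy' : 2 < y' := by rw [hy'def, lt_div_iff₀ hmu, hsdef]; linarith
  have hroot : x * y ^ 2 + 1 = y := by
    rw [hxdef, hydef, hsdef]
    field_simp
  have hroot' : x * y' ^ 2 + 1 = y' := by
    rw [hxdef, hy'def, hsdef]
    field_simp
    ring
  have hserie := cR_series hx h4 hy0 hy2 hy' hroot hroot' K
  -- the coefficients of the termwise expansion
  obtain ⟨r, hrdef⟩ : ∃ r : ℝ, r = (mu / lam) ^ (((K:ℝ)+1)/2) := ⟨_, rfl⟩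
  have hr0 : 0 ≤ r := by rw [hrdef]; positivity
  obtain ⟨A, hAdef⟩ : ∃ A : ℕ → ℝ, A = fun ℓ =>
      r * ((K:ℝ)+1) * a ^ (2*ℓ+K+1) /
        ((Nat.factorial (ℓ+K+1) : ℝ) * (Nat.factorial ℓ : ℝ)) := ⟨_, rfl⟩
  have hAval : ∀ ℓ, A ℓ = r * ((K:ℝ)+1) * a ^ (2*ℓ+K+1) /
      ((Nat.factorial (ℓ+K+1) : ℝ) * (Nat.factorial ℓ : ℝ)) := fun ℓ => by rw [hAdef]
  have hA0 : ∀ ℓ, 0 ≤ A ℓ := by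
    intro ℓ
    rw [hAval ℓ]
    positivity
  have hcast : ((K+1 : ℕ) : ℝ) = (K:ℝ)+1 := by push_cast; ring
  -- pointwise expansion of the integrand on `Ioi 0`
  have step1 : ∀ t ∈ Set.Ioi (0:ℝ),
      (mu / lam) ^ (((K:ℝ)+1) / 2) * Real.exp (-s * t) * (((K:ℝ)+1) / t) *
          besselI (K+1) (2 * a * t)
        = ∑' ℓ : ℕ, A ℓ * (t ^ (2*ℓ+K) * Real.exp (-(s * t))) := by
    intro t ht
    have ht0 : (0:ℝ) < t := ht
    rw [besselI]
    have h2 : ∀ ℓ : ℕ, (1 / ((Nat.factorial (ℓ + (K+1)) : ℝ) * (Nat.factorial ℓ : ℝ)))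
        * (2 * a * t / 2) ^ (2*ℓ + (K+1))
        = (1 / ((Nat.factorial (ℓ + K + 1) : ℝ) * (Nat.factorial ℓ : ℝ))) * (a * t) ^ (2*ℓ+K+1) := by
      intro ℓ
      rw [show 2 * a * t / 2 = a * t by ring, show ℓ + (K+1) = ℓ + K + 1 by omega,
        show 2*ℓ + (K+1) = 2*ℓ + K + 1 by omega]
    rw [tsum_congr h2, ← tsum_mul_left]
    refine tsum_congr (fun ℓ => ?_)
    rw [hAval ℓ]
    have hfac1 : (Nat.factorial (ℓ+K+1) : ℝ) ≠ 0 := Nat.cast_ne_zero.mpr (Nat.factorial_ne_zero _)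
    have hfac2 : (Nat.factorial ℓ : ℝ) ≠ 0 := Nat.cast_ne_zero.mpr (Nat.factorial_ne_zero _)
    rw [show ((mu / lam) ^ (((K:ℝ)+1) / 2) : ℝ) = r from hrdef.symm]
    rw [mul_pow, show -s * t = -(s * t) by ring, pow_succ]
    field_simp
    ring
  rw [setIntegral_congr_fun measurableSet_Ioi step1]
  -- swap integral and sum
  have hmeas : ∀ ℓ : ℕ, AEStronglyMeasurable
      (fun t : ℝ => A ℓ * (t ^ (2*ℓ+K) * Real.exp (-(s * t))))
      (volume.restrict (Set.Ioi 0)) := by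
    intro ℓ
    apply Continuous.aestronglyMeasurable
    continuity
  have hint : ∀ ℓ : ℕ, IntegrableOn
      (fun t : ℝ => A ℓ * (t ^ (2*ℓ+K) * Real.exp (-(s * t)))) (Set.Ioi 0) := by
    intro ℓ
    exact (integrableOn_pow_mul_exp (2*ℓ+K) hs0).const_mul (A ℓ)
  have hval : ∀ ℓ : ℕ, (∫ t in Set.Ioi (0:ℝ), A ℓ * (t ^ (2*ℓ+K) * Real.exp (-(s * t))))
      = A ℓ * ((Nat.factorial (2*ℓ+K) : ℝ) / s ^ (2*ℓ+K+1)) := by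
    intro ℓ
    rw [MeasureTheory.integral_const_mul, integral_pow_mul_exp (2*ℓ+K) hs0]
  obtain ⟨C, hCdef⟩ : ∃ C : ℝ, C = r * (a/s) ^ (K+1) := ⟨_, rfl⟩
  have hxa : x = (a/s) ^ 2 := by rw [hxdef, div_pow, ha2]
  have hIeq : ∀ ℓ : ℕ, A ℓ * ((Nat.factorial (2*ℓ+K) : ℝ) / s ^ (2*ℓ+K+1))
      = C * (cR (K+1) ℓ * x ^ ℓ) := by
    intro ℓ
    rw [hAval ℓ, hCdef, cR_succ, hxa]
    have hfac1 : (Nat.factorial (ℓ+K+1) : ℝ) ≠ 0 := Nat.cast_ne_zero.mpr (Nat.factorial_ne_zero _)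
    have hfac2 : (Nat.factorial ℓ : ℝ) ≠ 0 := Nat.cast_ne_zero.mpr (Nat.factorial_ne_zero _)
    have e1 : ((a/s) ^ 2) ^ ℓ = a ^ (2*ℓ) / s ^ (2*ℓ) := by
      rw [← pow_mul, div_pow]
    have e2 : (a/s) ^ (K+1) = a ^ (K+1) / s ^ (K+1) := div_pow a s (K+1)
    have en : 2*ℓ+K+1 = 2*ℓ+(K+1) := by omega
    have e3 : a ^ (2*ℓ+K+1) = a ^ (2*ℓ) * a ^ (K+1) := by rw [en, pow_add]
    have e4 : s ^ (2*ℓ+K+1) = s ^ (2*ℓ) * s ^ (K+1) := by rw [en, pow_add]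
    rw [e1, e2, e3, e4]
    have h1 : s ^ (2*ℓ) ≠ 0 := pow_ne_zero _ hs0.ne'
    have h2 : s ^ (K+1) ≠ 0 := pow_ne_zero _ hs0.ne'
    field_simp
  have hIsum : Summable (fun ℓ => A ℓ * ((Nat.factorial (2*ℓ+K) : ℝ) / s ^ (2*ℓ+K+1))) := by
    have h := (summable_cR hx.le h4 (K+1)).mul_left C
    exact h.congr (fun ℓ => (hIeq ℓ).symm)
  have hInn : ∀ ℓ : ℕ, 0 ≤ A ℓ * ((Nat.factorial (2*ℓ+K) : ℝ) / s ^ (2*ℓ+K+1)) := by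
    intro ℓ
    exact mul_nonneg (hA0 ℓ) (by positivity)
  have hgnn : ∀ ℓ : ℕ, ∀ t ∈ Set.Ioi (0:ℝ), 0 ≤ A ℓ * (t ^ (2*ℓ+K) * Real.exp (-(s * t))) := by
    intro ℓ t ht
    have ht0 : (0:ℝ) < t := ht
    have := hA0 ℓ
    positivity
  have hfin : (∑' ℓ : ℕ, ∫⁻ t in Set.Ioi (0:ℝ),
      ‖A ℓ * (t ^ (2*ℓ+K) * Real.exp (-(s * t)))‖₊) ≠ ⊤ := by
    have heach : ∀ ℓ : ℕ, (∫⁻ t in Set.Ioi (0:ℝ), ‖A ℓ * (t ^ (2*ℓ+K) * Real.exp (-(s * t)))‖₊)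
        = ENNReal.ofReal (A ℓ * ((Nat.factorial (2*ℓ+K) : ℝ) / s ^ (2*ℓ+K+1))) := by
      intro ℓ
      have h1 : (∫⁻ t in Set.Ioi (0:ℝ), ‖A ℓ * (t ^ (2*ℓ+K) * Real.exp (-(s * t)))‖₊)
          = ∫⁻ t in Set.Ioi (0:ℝ), ENNReal.ofReal (A ℓ * (t ^ (2*ℓ+K) * Real.exp (-(s * t)))) := by
        refine setLIntegral_congr_fun measurableSet_Ioi ?_
        intro t ht
        exact Real.enorm_eq_ofReal (hgnn ℓ t ht)
      rw [h1, ← MeasureTheory.ofReal_integral_eq_lintegral_ofReal (hint ℓ)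
        ((ae_restrict_iff' measurableSet_Ioi).mpr (Filter.Eventually.of_forall (hgnn ℓ))),
        hval ℓ]
    rw [tsum_congr heach, ← ENNReal.ofReal_tsum_of_nonneg hInn hIsum]
    exact ENNReal.ofReal_ne_top
  rw [MeasureTheory.integral_tsum hmeas hfin]
  -- evaluate the sum
  have hsa : Real.sqrt (mu / lam) * a = mu := by
    rw [hadef, ← Real.sqrt_mul (by positivity)]
    rw [show mu / lam * (mu * lam) = mu ^ 2 by field_simp]
    exact Real.sqrt_sq hmu.le
  have hsqrt_pow : r = (Real.sqrt (mu / lam)) ^ (K+1) := by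
    rw [hrdef, Real.sqrt_eq_rpow, ← Real.rpow_natCast ((mu/lam) ^ ((1:ℝ)/2)) (K+1),
      ← Real.rpow_mul (by positivity)]
    congr 1
    push_cast
    ring
  have hkey : C * y ^ (K+1) = (mu / lam) ^ (K+1) := by
    rw [hCdef, hsqrt_pow, ← mul_pow, ← mul_pow]
    congr 1
    rw [hydef]
    calc Real.sqrt (mu/lam) * (a/s) * (s/lam)
        = (Real.sqrt (mu/lam) * a) * (s / s) / lam := by ring
      _ = mu / lam := by rw [div_self hs0.ne', hsa, mul_one]
  calc (∑' ℓ : ℕ, ∫ t in Set.Ioi (0:ℝ), A ℓ * (t ^ (2*ℓ+K) * Real.exp (-(s * t))))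
      = ∑' ℓ : ℕ, C * (cR (K+1) ℓ * x ^ ℓ) := by
        refine tsum_congr (fun ℓ => ?_)
        rw [hval ℓ, hIeq ℓ]
    _ = C * SX x (K+1) := by rw [tsum_mul_left]; rfl
    _ = C * y ^ (K+1) := by rw [hserie]
    _ = (mu / lam) ^ (K+1) := hkey
end

section
/- Let 0 < λ < μ and let s ≥ 0. Then ∫_0^∞ e^{-st} √(μ/λ) e^{-(μ+λ)t} (1/t) I_1(2√(μλ) t) dt = 2μ / (√((s + μ + λ)^2 - 4μλ) + s + μ + λ). In particular, taking s = 0 the integral equals 1. -/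
open MeasureTheory

section AuxLemmas
open Finset

lemma myCentralBinom_le_four_pow (n : ℕ) : Nat.centralBinom n ≤ 4 ^ n := by
  have h : Nat.centralBinom n ≤ ∑ i ∈ range (2*n+1), (2*n).choose i :=
    single_le_sum (f := fun i => (2*n).choose i) (fun i _ => Nat.zero_le _)
      (by simp only [mem_range]; omega)
  calc Nat.centralBinom n ≤ 2 ^ (2*n) := by
        simpa [Nat.sum_range_choose] using h
    _ = 4 ^ n := by rw [pow_mul]; norm_num

lemma myCatalan_le_four_pow (n : ℕ) : (catalan n : ℝ) ≤ 4 ^ n := by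
  have h1 : catalan n ≤ Nat.centralBinom n := by
    rw [← succ_mul_catalan_eq_centralBinom]
    exact Nat.le_mul_of_pos_left _ (Nat.succ_pos n)
  have := h1.trans (myCentralBinom_le_four_pow n)
  calc (catalan n : ℝ) ≤ ((4^n : ℕ) : ℝ) := by exact_mod_cast this
    _ = 4 ^ n := by push_cast; ring

lemma mySummable_cat {x : ℝ} (hx0 : 0 ≤ x) (hx : x < 1/4) :
    Summable (fun n => (catalan n : ℝ) * x^n) := by
  refine Summable.of_nonneg_of_le (fun n => by positivity) (fun n => ?_)
    (summable_geometric_of_lt_one (r := 4*x) (by positivity) (by linarith))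
  calc (catalan n : ℝ) * x^n ≤ 4^n * x^n :=
        mul_le_mul_of_nonneg_right (myCatalan_le_four_pow n) (pow_nonneg hx0 n)
    _ = (4*x)^n := (mul_pow 4 x n).symm

lemma mySummable_cat' {x : ℝ} (hx0 : 0 ≤ x) (hx : x < 1/4) :
    Summable (fun n => (catalan (n+1) : ℝ) * x^n) := by
  refine Summable.of_nonneg_of_le (fun n => by positivity) (fun n => ?_)
    ((summable_geometric_of_lt_one (r := 4*x) (by positivity) (by linarith)).mul_left 4)
  calc (catalan (n+1) : ℝ) * x^n ≤ 4^(n+1) * x^n :=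
        mul_le_mul_of_nonneg_right (myCatalan_le_four_pow (n+1)) (pow_nonneg hx0 n)
    _ = 4 * (4*x)^n := by rw [mul_pow]; ring

lemma myCatalan_quad {x : ℝ} (hx0 : 0 ≤ x) (hx : x < 1/4) :
    x * (∑' n, (catalan n : ℝ) * x^n)^2 + 1 = ∑' n, (catalan n : ℝ) * x^n := by
  set f : ℕ → ℝ := fun n => (catalan n : ℝ) * x^n with hf
  have hs := mySummable_cat hx0 hx
  have hnorm : Summable fun n => ‖f n‖ := by
    refine hs.congr fun n => ?_
    rw [Real.norm_eq_abs, abs_of_nonneg (by positivity)]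
  have key : (∑' n, f n) * (∑' n, f n) = ∑' n, (catalan (n+1) : ℝ) * x^n := by
    rw [tsum_mul_tsum_eq_tsum_sum_range_of_summable_norm hnorm hnorm]
    congr 1; funext n
    have h1 : ∀ k ∈ range (n+1), f k * f (n-k) = ((catalan k * catalan (n-k) : ℕ) : ℝ) * x^n := by
      intro k hk
      simp only [hf]
      push_cast
      rw [mul_mul_mul_comm, ← pow_add]
      congr 2
      have := mem_range.mp hk
      omega
    rw [Finset.sum_congr rfl h1, ← Finset.sum_mul, ← Nat.cast_sum]
    congr 2
    have h2 := catalan_succ' n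
    rw [Nat.sum_antidiagonal_eq_sum_range_succ (fun a b => catalan a * catalan b) n] at h2
    exact h2.symm
  have hs' := mySummable_cat' hx0 hx
  calc x * (∑' n, f n)^2 + 1
      = x * (∑' n, (catalan (n+1) : ℝ) * x^n) + 1 := by rw [sq, key]
    _ = (∑' n, (catalan (n+1) : ℝ) * x^(n+1)) + 1 := by
        rw [← tsum_mul_left,
          tsum_congr (fun n : ℕ => by ring :
            ∀ n : ℕ, x * ((catalan (n+1):ℝ) * x ^ n) = (catalan (n+1):ℝ) * x^(n+1))]
    _ = ∑' n, f n := by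
        rw [Summable.tsum_eq_zero_add hs]
        simp only [hf, catalan_zero, Nat.cast_one, pow_zero, mul_one]
        ring

lemma myCatalan_gf {x : ℝ} (hx0 : 0 < x) (hx : x < 1/4) :
    ∑' n, (catalan n : ℝ) * x ^ n = (1 - Real.sqrt (1 - 4*x)) / (2*x) := by
  set g : ℝ → ℝ := fun y => ∑' n, (catalan n : ℝ) * y^n with hg
  have hcont : ContinuousOn g (Set.Icc 0 x) := by
    refine continuousOn_tsum (u := fun n => (4*x)^n)
      (fun i => (continuous_const.mul (continuous_pow i)).continuousOn)
      (summable_geometric_of_lt_one (r := 4*x) (by positivity) (by linarith))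
      (fun n y hy => ?_)
    rw [Real.norm_eq_abs, abs_of_nonneg (mul_nonneg (Nat.cast_nonneg _) (pow_nonneg hy.1 n))]
    calc (catalan n : ℝ) * y^n ≤ 4^n * x^n := by
          refine mul_le_mul (myCatalan_le_four_pow n) (pow_le_pow_left₀ hy.1 hy.2 n)
            (pow_nonneg hy.1 n) (by positivity)
      _ = (4*x)^n := (mul_pow 4 x n).symm
  set h : ℝ → ℝ := fun y => 2*y*(g y) - 1 with hh
  have hconth : ContinuousOn h (Set.Icc 0 x) :=
    ((continuousOn_const.mul continuousOn_id).mul hcont).sub continuousOn_const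
  have hsq : ∀ y ∈ Set.Icc 0 x, h y ^ 2 = 1 - 4*y := by
    intro y hy
    have hq := myCatalan_quad hy.1 (lt_of_le_of_lt hy.2 hx)
    simp only [hh, hg] at *
    nlinarith [hq]
  have hne : ∀ y ∈ Set.Icc 0 x, h y ≠ 0 := by
    intro y hy h0
    have h2 := hsq y hy
    rw [h0] at h2
    have := hy.2
    nlinarith
  have hx0' : h 0 = -1 := by simp [hh]
  have hneg : h x < 0 := by
    rcases lt_or_ge (h x) 0 with h' | h'
    · exact h'
    · exfalso
      have hmem : (0:ℝ) ∈ Set.Icc (h 0) (h x) := by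
        rw [hx0']; constructor <;> linarith
      obtain ⟨c, hc, hc0⟩ := intermediate_value_Icc hx0.le hconth hmem
      exact hne c hc hc0
  have hsx : Real.sqrt (1 - 4*x) = -(h x) := by
    rw [← hsq x (Set.right_mem_Icc.mpr hx0.le), Real.sqrt_sq_eq_abs, abs_of_neg hneg]
  have hhx : h x = 2*x*(g x) - 1 := rfl
  have : g x = (1 - Real.sqrt (1-4*x)) / (2*x) := by
    rw [hsx, hhx, eq_div_iff (by positivity : (2:ℝ)*x ≠ 0)]
    ring
  simpa [hg] using this

lemma myIntegrable_pow_exp {p : ℝ} (hp : 0 < p) (n : ℕ) :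
    IntegrableOn (fun t : ℝ => t ^ n * Real.exp (-p * t)) (Set.Ioi 0) := by
  have h := integrableOn_rpow_mul_exp_neg_mul_rpow (p := 1) (s := (n:ℝ)) (b := p)
    (lt_of_lt_of_le neg_one_lt_zero (Nat.cast_nonneg n)) one_pos hp
  refine h.congr_fun (fun t ht => ?_) measurableSet_Ioi
  dsimp only
  rw [Real.rpow_one, Real.rpow_natCast]

lemma myIntegral_pow_exp {p : ℝ} (hp : 0 < p) (n : ℕ) :
    ∫ t in Set.Ioi (0:ℝ), t ^ n * Real.exp (-p * t) = n.factorial / p ^ (n+1) := by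
  have h := Real.integral_rpow_mul_exp_neg_mul_Ioi (a := (n:ℝ)+1) (r := p) (by positivity) hp
  have e1 : ∀ t ∈ Set.Ioi (0:ℝ),
      t ^ ((n:ℝ)+1-1) * Real.exp (-(p*t)) = t ^ n * Real.exp (-p*t) := by
    intro t ht
    rw [show ((n:ℝ)+1-1) = (n:ℝ) by ring, Real.rpow_natCast, neg_mul]
  rw [setIntegral_congr_fun measurableSet_Ioi e1] at h
  rw [h, show ((n:ℝ)+1) = ((n+1:ℕ):ℝ) by push_cast; ring, Real.rpow_natCast]
  push_cast
  rw [Real.Gamma_nat_eq_factorial, div_pow, one_pow]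
  ring

end AuxLemmas

/-- For `0 < λ < μ` and `s ≥ 0`,
`∫_0^∞ e^{-st} √(μ/λ) e^{-(μ+λ)t} (1/t) I_1(2√(μλ) t) dt`
`= 2μ/(√((s+μ+λ)² - 4μλ) + s + μ + λ)`. -/
theorem mgf_survival_time
    (lam mu : ℝ) (hlam : 0 < lam) (hlammu : lam < mu) (s : ℝ) (hs : 0 ≤ s) :
    ∫ t in Set.Ioi (0:ℝ),
        Real.exp (-s * t) * Real.sqrt (mu / lam) * Real.exp (-(mu + lam) * t) * (1 / t) *
          besselI 1 (2 * Real.sqrt (mu * lam) * t) =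
      2 * mu / (Real.sqrt ((s + mu + lam) ^ 2 - 4 * mu * lam) + s + mu + lam) := by
  have hmu : 0 < mu := hlam.trans hlammu
  set A := Real.sqrt (mu*lam) with hA
  have hA0 : 0 < A := Real.sqrt_pos.mpr (by positivity)
  set p := s + mu + lam with hpdef
  have hp0 : 0 < p := by positivity
  have hA2' : A^2 = mu*lam := Real.sq_sqrt (by positivity)
  have h2A : 2 * A < mu + lam := by
    have hsqlt : Real.sqrt lam < Real.sqrt mu := Real.sqrt_lt_sqrt hlam.le hlammu
    have hA2 : A = Real.sqrt mu * Real.sqrt lam := Real.sqrt_mul hmu.le lam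
    have hmu' : Real.sqrt mu ^ 2 = mu := Real.sq_sqrt hmu.le
    have hlam' : Real.sqrt lam ^ 2 = lam := Real.sq_sqrt hlam.le
    nlinarith
  have hap : 2*A < p := by rw [hpdef]; linarith
  set b := Real.sqrt (mu/lam) with hb
  have hb0 : 0 < b := Real.sqrt_pos.mpr (by positivity)
  set y := A / p with hy
  have hy0 : 0 < y := div_pos hA0 hp0
  have hy2 : y < 1/2 := by rw [hy, div_lt_iff₀ hp0]; linarith
  set x := y^2 with hx
  have hx0 : 0 < x := by positivity
  have hx4 : x < 1/4 := by rw [hx]; nlinarith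
  set c : ℕ → ℝ := fun n =>
    b * A^(2*n+1) / ((Nat.factorial (n+1) : ℝ) * (Nat.factorial n)) with hc
  -- pointwise identity
  have hpt : Set.EqOn
      (fun t : ℝ => Real.exp (-s*t) * b * Real.exp (-(mu+lam)*t) * (1/t) * besselI 1 (2*A*t))
      (fun t : ℝ => ∑' n : ℕ, c n * (t^(2*n) * Real.exp (-p*t))) (Set.Ioi 0) := by
    intro t ht
    have ht0 : (0:ℝ) < t := ht
    simp only [besselI]
    rw [← tsum_mul_left]
    refine tsum_congr fun n => ?_
    have hf1 : ((Nat.factorial (n+1) : ℝ)) ≠ 0 := Nat.cast_ne_zero.mpr (Nat.factorial_ne_zero _)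
    have hf2 : ((Nat.factorial n : ℝ)) ≠ 0 := Nat.cast_ne_zero.mpr (Nat.factorial_ne_zero _)
    have h2 : Real.exp (-s*t) * Real.exp (-(mu+lam)*t) = Real.exp (-p*t) := by
      rw [← Real.exp_add, hpdef]; congr 1; ring
    have h1 : (2*A*t/2) = A*t := by ring
    rw [h1, mul_pow, pow_succ t (2*n), hc]
    rw [← h2]
    field_simp
  rw [setIntegral_congr_fun measurableSet_Ioi hpt]
  -- nonnegativity
  have hnn : ∀ n : ℕ, ∀ t : ℝ, 0 ≤ c n * (t^(2*n) * Real.exp (-p*t)) := by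
    intro n t
    have h1 : (0:ℝ) ≤ t^(2*n) := by rw [pow_mul]; positivity
    have h2 : (0:ℝ) ≤ c n := by rw [hc]; positivity
    exact mul_nonneg h2 (mul_nonneg h1 (Real.exp_pos _).le)
  -- integrability and values
  have hint : ∀ n : ℕ, IntegrableOn (fun t : ℝ => c n * (t^(2*n) * Real.exp (-p*t)))
      (Set.Ioi 0) := fun n => (myIntegrable_pow_exp hp0 (2*n)).const_mul (c n)
  have hcatnat : ∀ n : ℕ, (2*n).factorial = catalan n * ((n+1).factorial) * n.factorial := by
    intro n
    have h1 := Nat.choose_mul_factorial_mul_factorial (show n ≤ 2*n by omega)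
    rw [show 2*n-n = n by omega] at h1
    have h2 := succ_mul_catalan_eq_centralBinom n
    rw [Nat.centralBinom_eq_two_mul_choose] at h2
    calc (2*n).factorial = (2*n).choose n * n.factorial * n.factorial := h1.symm
      _ = ((n+1) * catalan n) * n.factorial * n.factorial := by rw [h2]
      _ = catalan n * ((n+1).factorial) * n.factorial := by
          rw [Nat.factorial_succ]; ring
  have hval : ∀ n : ℕ, (∫ t in Set.Ioi (0:ℝ), c n * (t^(2*n) * Real.exp (-p*t)))
      = (b*y) * ((catalan n : ℝ) * x^n) := by
    intro n
    rw [integral_const_mul, myIntegral_pow_exp hp0 (2*n)]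
    have hf1 : ((Nat.factorial (n+1) : ℝ)) ≠ 0 := Nat.cast_ne_zero.mpr (Nat.factorial_ne_zero _)
    have hf2 : ((Nat.factorial n : ℝ)) ≠ 0 := Nat.cast_ne_zero.mpr (Nat.factorial_ne_zero _)
    have hcat : ((2*n).factorial : ℝ) = (catalan n : ℝ) * ((n+1).factorial) * n.factorial := by
      exact_mod_cast congrArg (fun m : ℕ => (m:ℝ)) (hcatnat n)
    have hyx : y^(2*n+1) = y * x^n := by
      rw [pow_succ, pow_mul, ← hx]; ring
    calc c n * (((2*n).factorial : ℝ) / p^(2*n+1))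
        = b * A^(2*n+1) / (((n+1).factorial : ℝ) * n.factorial) *
            ((catalan n : ℝ) * ((n+1).factorial) * n.factorial / p^(2*n+1)) := by
          rw [hc, hcat]
      _ = b * (catalan n : ℝ) * (A^(2*n+1) / p^(2*n+1)) := by field_simp
      _ = b * (catalan n : ℝ) * y^(2*n+1) := by rw [hy, div_pow]
      _ = (b*y) * ((catalan n : ℝ) * x^n) := by rw [hyx]; ring
  -- swap integral and sum
  have hmeas : ∀ n : ℕ, AEStronglyMeasurable (fun t : ℝ => c n * (t^(2*n) * Real.exp (-p*t)))
      (volume.restrict (Set.Ioi 0)) := by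
    intro n
    exact (Continuous.aestronglyMeasurable (continuous_const.mul ((continuous_pow (2*n)).mul
      (Real.continuous_exp.comp (continuous_const.mul continuous_id))))).restrict
  have hsummable : Summable (fun n : ℕ => (b*y) * ((catalan n : ℝ) * x^n)) :=
    (mySummable_cat hx0.le hx4).mul_left (b*y)
  have hlint : ∑' n : ℕ, ∫⁻ t, ‖c n * (t^(2*n) * Real.exp (-p*t))‖₊
      ∂(volume.restrict (Set.Ioi 0)) ≠ ⊤ := by
    have heq : ∀ n : ℕ, (∫⁻ t, ‖c n * (t^(2*n) * Real.exp (-p*t))‖₊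
        ∂(volume.restrict (Set.Ioi 0)))
        = ENNReal.ofReal ((b*y) * ((catalan n : ℝ) * x^n)) := by
      intro n
      rw [lintegral_congr (f := fun t => (‖c n * (t^(2*n) * Real.exp (-p*t))‖₊ : ENNReal))
          (fun t => Real.enorm_eq_ofReal (hnn n t)),
        ← ofReal_integral_eq_lintegral_ofReal (hint n) (Filter.Eventually.of_forall (hnn n)),
        hval n]
    rw [tsum_congr heq, ← ENNReal.ofReal_tsum_of_nonneg
      (fun n => by positivity) hsummable]
    exact ENNReal.ofReal_ne_top
  rw [integral_tsum hmeas hlint, tsum_congr hval, tsum_mul_left, myCatalan_gf hx0 hx4]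
  -- final algebra
  have hDpos : 0 < p^2 - 4*mu*lam := by nlinarith
  set D := Real.sqrt (p^2 - 4*mu*lam) with hD
  have hD0 : 0 ≤ D := Real.sqrt_nonneg _
  have hD2 : D^2 = p^2 - 4*mu*lam := Real.sq_sqrt hDpos.le
  have hsqrt14 : Real.sqrt (1 - 4*x) = D / p := by
    have hxval : 1 - 4*x = (p^2 - 4*mu*lam)/p^2 := by
      rw [hx, hy, div_pow]
      field_simp
      nlinarith
    rw [hxval, hD, Real.sqrt_div hDpos.le, Real.sqrt_sq hp0.le]
  have hblam : b * lam = A := by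
    rw [hb, hA, show (lam:ℝ) = Real.sqrt (lam^2) from (Real.sqrt_sq hlam.le).symm,
      ← Real.sqrt_mul (by positivity) (lam^2)]
    congr 1
    field_simp
    rw [Real.sq_sqrt (sq_nonneg lam)]
  rw [hsqrt14, hx, hy]
  have hcalc : b * (A/p) * ((1 - D/p) / (2 * (A/p)^2)) = b * (p - D) / (2*A) := by
    field_simp
  rw [hcalc, div_eq_div_iff (by positivity) (by positivity)]
  rw [show D + s + mu + lam = D + p from by rw [hpdef]; ring]
  linear_combination (-b) * hD2 + 4*mu*hblam
end
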